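/- arXiv:2005.08651 — 8 statements merged into one kernel-verified Lean document; each statement's English description precedes it below -/
import Mathlib

section
/- Let p ≥ 5 be prime and let 1 = q₀ < q₁ < ... < q₍₍p₋₃₎/₂₎ be the quadratic residues modulo p in increasing order. Define dₙ = (qₙ + qₙ₊₁) mod 2 for n = 0, ..., (p-5)/2. Then the sum D(1) = Σₙ dₙ over 𝔽₂ equals 0 if p ≡ 3 (mod 8) and equals 1 otherwise. -/
theorem sum_of_dn_eq (p : ℕ) (hp : p.Prime) (hp5 : 5 ≤ p) (q : ℕ → ℕ)
    (hmono : ∀ i j : ℕ, i < j → j ≤ (p - 3) / 2 → q i < q j)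
    (hbij : ∀ m : ℕ, (1 ≤ m ∧ m ≤ p - 1 ∧ ∃ x : ℕ, x ^ 2 % p = m) ↔
      ∃ n ≤ (p - 3) / 2, q n = m)
    (d : ℕ → ℕ) (hd : ∀ n ≤ (p - 5) / 2, d n = (q n + q (n + 1)) % 2) :
    (∑ n ∈ Finset.range ((p - 3) / 2), (d n : ZMod 2)) =
      if p % 8 = 3 then 0 else 1 := by
  haveI : Fact p.Prime := ⟨hp⟩
  have hp2 : p % 2 = 1 := (Nat.Prime.mod_two_eq_one_iff_ne_two hp).mpr (by omega)
  have h2ne : (2 : ZMod p) ≠ 0 := by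
    intro h
    rw [show (2 : ZMod p) = ((2 : ℕ) : ZMod p) by norm_num,
      ZMod.natCast_eq_zero_iff] at h
    have := Nat.le_of_dvd (by norm_num) h
    omega
  set N := (p - 3) / 2 with hN
  -- membership facts
  have hqmem : ∀ n ≤ N, 1 ≤ q n ∧ q n ≤ p - 1 ∧ ∃ x : ℕ, x ^ 2 % p = q n := by
    intro n hn
    exact (hbij (q n)).mpr ⟨n, hn, rfl⟩
  -- q 0 = 1
  have hq0 : q 0 = 1 := by
    obtain ⟨n, hn, hqn⟩ := (hbij 1).mp ⟨le_rfl, by omega, 1, by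
      simp [Nat.mod_eq_of_lt (by omega : 1 < p)]⟩
    rcases Nat.eq_zero_or_pos n with h | h
    · subst h; exact hqn
    · have h1 := hmono 0 n h hn
      have h2 := (hqmem 0 (Nat.zero_le _)).1
      omega
  -- q N is the maximum QR
  have hmax : ∀ m : ℕ, 1 ≤ m → m ≤ p - 1 → (∃ x : ℕ, x ^ 2 % p = m) → m ≤ q N := by
    intro m h1 h2 h3
    obtain ⟨n, hn, hqn⟩ := (hbij m).mp ⟨h1, h2, h3⟩
    rcases eq_or_lt_of_le hn with h | h
    · subst h; omega
    · have := hmono n N h le_rfl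
      omega
  -- natural-number QR vs IsSquare in ZMod p
  have hsq : ∀ m : ℕ, m < p → ((∃ x : ℕ, x ^ 2 % p = m) ↔ IsSquare ((m : ZMod p))) := by
    intro m hm
    constructor
    · rintro ⟨x, hx⟩
      refine ⟨(x : ZMod p), ?_⟩
      have h := congrArg (Nat.cast : ℕ → ZMod p) hx
      rw [ZMod.natCast_mod] at h
      push_cast at h
      rw [← h]; ring
    · rintro ⟨y, hy⟩
      refine ⟨y.val, ?_⟩
      have h : ((y.val ^ 2 : ℕ) : ZMod p) = (m : ZMod p) := by
        push_cast
        rw [ZMod.natCast_val, ZMod.cast_id, hy]; ring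
      calc y.val ^ 2 % p = ((y.val ^ 2 : ℕ) : ZMod p).val := (ZMod.val_natCast p _).symm
        _ = ((m : ℕ) : ZMod p).val := by rw [h]
        _ = m := by rw [ZMod.val_natCast, Nat.mod_eq_of_lt hm]
  have hcastsub : ∀ c : ℕ, c ≤ p → ((p - c : ℕ) : ZMod p) = -(c : ZMod p) := by
    intro c hc
    rw [Nat.cast_sub hc, ZMod.natCast_self, zero_sub]
  set M := q N with hM
  have hM1 : 1 ≤ M := (hqmem N le_rfl).1
  have hMp : M ≤ p - 1 := (hqmem N le_rfl).2.1
  have hMsq : IsSquare ((M : ZMod p)) := (hsq M (by omega)).mp (hqmem N le_rfl).2.2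
  have hmax' : ∀ m : ℕ, 1 ≤ m → m ≤ p - 1 → IsSquare ((m : ZMod p)) → m ≤ M := by
    intro m h1 h2 h3
    exact hmax m h1 h2 ((hsq m (by omega)).mpr h3)
  -- determine parity of M
  have hMparity : M % 2 = (if p % 8 = 3 then 1 else 0) := by
    have h8 : p % 8 = 1 ∨ p % 8 = 3 ∨ p % 8 = 5 ∨ p % 8 = 7 := by omega
    rcases h8 with h8 | h8 | h8 | h8
    · -- p ≡ 1 (mod 8): M = p - 1
      have hsqneg1 : IsSquare (-1 : ZMod p) :=
        ZMod.exists_sq_eq_neg_one_iff.mpr (by omega)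
      have hle : p - 1 ≤ M := hmax' (p - 1) (by omega) le_rfl
        (by rw [hcastsub 1 (by omega)]; simpa using hsqneg1)
      simp only [if_neg (by omega : ¬ p % 8 = 3)]
      omega
    · -- p ≡ 3 (mod 8): M = p - 2
      have hsqneg2 : IsSquare (-2 : ZMod p) :=
        (ZMod.exists_sq_eq_neg_two_iff (p := p) (by omega)).mpr (by omega)
      have h1 : p - 2 ≤ M := hmax' (p - 2) (by omega) (by omega)
        (by rw [hcastsub 2 (by omega)]; simpa using hsqneg2)
      have h2 : M ≠ p - 1 := by
        intro h
        have hs1 : IsSquare (-1 : ZMod p) := by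
          rw [show (-1 : ZMod p) = ((p - 1 : ℕ) : ZMod p) by
            rw [hcastsub 1 (by omega)]; simp]
          rw [← h]
          exact hMsq
        have := ZMod.exists_sq_eq_neg_one_iff.mp hs1
        omega
      simp only [if_pos h8]
      omega
    · -- p ≡ 5 (mod 8): M = p - 1
      have hsqneg1 : IsSquare (-1 : ZMod p) :=
        ZMod.exists_sq_eq_neg_one_iff.mpr (by omega)
      have hle : p - 1 ≤ M := hmax' (p - 1) (by omega) le_rfl
        (by rw [hcastsub 1 (by omega)]; simpa using hsqneg1)
      simp only [if_neg (by omega : ¬ p % 8 = 3)]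
      omega
    · -- p ≡ 7 (mod 8): M is even
      simp only [if_neg (by omega : ¬ p % 8 = 3)]
      by_contra hodd
      have hModd : M % 2 = 1 := by omega
      set k := (p - M) / 2 with hk
      have hk2 : 2 * k = p - M := by omega
      have hk1 : 1 ≤ k := by omega
      have hsq2 : IsSquare (2 : ZMod p) :=
        (ZMod.exists_sq_eq_two_iff (p := p) (by omega)).mpr (by omega)
      obtain ⟨s, hs⟩ := hsq2
      obtain ⟨t, ht⟩ := hMsq
      have hs0 : s ≠ 0 := by
        intro h
        rw [h, mul_zero] at hs
        exact h2ne hs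
      have h2k : (2 : ZMod p) * (k : ℕ) = -(M : ZMod p) := by
        have h := congrArg (Nat.cast : ℕ → ZMod p) hk2
        push_cast at h
        rw [h, hcastsub M (by omega)]
      have hssne : s * s ≠ 0 := mul_ne_zero hs0 hs0
      have hsi : s⁻¹ * s = 1 := inv_mul_cancel₀ hs0
      have hkey : -(k : ZMod p) * (s * s) = ((t * s⁻¹) * (t * s⁻¹)) * (s * s) := by
        calc -(k : ZMod p) * (s * s) = -((s * s) * (k : ℕ)) := by ring
          _ = -((2 : ZMod p) * (k : ℕ)) := by rw [← hs]
          _ = (M : ZMod p) := by rw [h2k]; ring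
          _ = t * t := ht
          _ = (t * t) * ((s⁻¹ * s) * (s⁻¹ * s)) := by rw [hsi]; ring
          _ = ((t * s⁻¹) * (t * s⁻¹)) * (s * s) := by ring
      have hnegk : -(k : ZMod p) = (t * s⁻¹) * (t * s⁻¹) := mul_right_cancel₀ hssne hkey
      have hsqpk : IsSquare (((p - k : ℕ) : ZMod p)) := by
        rw [hcastsub k (by omega)]
        exact ⟨t * s⁻¹, hnegk⟩
      have hle := hmax' (p - k) (by omega) (by omega) hsqpk
      omega
  -- telescoping sum
  have hstep : ∀ n ∈ Finset.range N, (d n : ZMod 2) = (q (n + 1) : ZMod 2) - (q n : ZMod 2) := by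
    intro n hn
    rw [Finset.mem_range] at hn
    rw [hd n (by omega)]
    rw [ZMod.natCast_mod]
    rw [CharTwo.sub_eq_add]
    push_cast
    ring
  rw [Finset.sum_congr rfl hstep, Finset.sum_range_sub (fun n => (q n : ZMod 2))]
  rw [hq0]
  have hMcast : ((M : ℕ) : ZMod 2) = ((M % 2 : ℕ) : ZMod 2) := (ZMod.natCast_mod M 2).symm
  rw [show q N = M from rfl, hMcast, hMparity]
  split_ifs with h
  · norm_num
  · push_cast
    decide
end

section
/- Let r be an odd prime such that 2 is a primitive root modulo r, and let β be a primitive r-th root of unity in an extension field of 𝔽₂. Let (sₙ) be a T-periodic binary sequence with r dividing T, and set S(X) = Σₙ₌₀^{T-1} sₙXⁿ over 𝔽₂. If S(β) = 0, then for every h with 0 ≤ h ≤ r-1, the sum Σⱼ₌₀^{T/r - 1} s_{h+jr} (in 𝔽₂) equals S(1). -/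
open Polynomial

lemma sum_range_mul_eq {M : Type*} [AddCommMonoid M] (f : ℕ → M) (r m : ℕ) :
    ∑ n ∈ Finset.range (m * r), f n
      = ∑ h ∈ Finset.range r, ∑ j ∈ Finset.range m, f (h + j * r) := by
  induction m with
  | zero => simp
  | succ m ih =>
      rw [Nat.succ_mul, Finset.sum_range_add, ih, ← Finset.sum_add_distrib]
      refine Finset.sum_congr rfl fun h _ => ?_
      rw [Finset.sum_range_succ, Nat.add_comm (m * r) h]

theorem sum_over_residue_classes_of_root (r T : ℕ) (hr : r.Prime) (hodd : Odd r)
    (hprim : orderOf (2 : ZMod r) = r - 1) (hdvd : r ∣ T)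
    (F : Type*) [Field F] [Algebra (ZMod 2) F] (β : F) (hβ : IsPrimitiveRoot β r)
    (s : ℕ → ZMod 2) (hper : ∀ n, s (n + T) = s n)
    (hS : ∑ n ∈ Finset.range T, algebraMap (ZMod 2) F (s n) * β ^ n = 0) :
    ∀ h ≤ r - 1, ∑ j ∈ Finset.range (T / r), s (h + j * r) =
      ∑ n ∈ Finset.range T, s n := by
  haveI : Fact (Nat.Prime r) := ⟨hr⟩
  set m := T / r with hm
  have hT : T = m * r := (Nat.div_mul_cancel hdvd).symm
  set c : ℕ → ZMod 2 := fun h => ∑ j ∈ Finset.range m, s (h + j * r) with hc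
  have hβr : β ^ r = 1 := hβ.pow_eq_one
  -- Step A
  have hS' : ∑ h ∈ Finset.range r, algebraMap (ZMod 2) F (c h) * β ^ h = 0 := by
    rw [← hS, hT, sum_range_mul_eq]
    refine Finset.sum_congr rfl fun h _ => ?_
    rw [hc, map_sum, Finset.sum_mul]
    refine Finset.sum_congr rfl fun j _ => ?_
    rw [pow_add, pow_mul', hβr, one_pow, mul_one]
  -- Step B
  set Q : Polynomial (ZMod 2) := ∑ h ∈ Finset.range r, C (c h) * X ^ h with hQ
  have haQ : aeval β Q = 0 := by
    rw [hQ, map_sum, ← hS']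
    refine Finset.sum_congr rfl fun h _ => ?_
    simp [aeval_C]
  -- β integral
  have hβ0 : β ≠ 0 := by
    intro h0
    rw [h0, zero_pow hr.pos.ne'] at hβr
    exact zero_ne_one hβr
  have hβ1 : β ≠ 1 := by
    intro h1
    have : r ∣ 1 := hβ.dvd_of_pow_eq_one 1 (by simp [h1])
    exact hr.one_lt.ne' (Nat.eq_one_of_dvd_one this)
  have hint : IsIntegral (ZMod 2) β :=
    ⟨X ^ r - C 1, monic_X_pow_sub_C 1 hr.pos.ne', by simp [hβr]⟩
  set P : Polynomial (ZMod 2) := minpoly (ZMod 2) β with hP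
  set Φ : Polynomial (ZMod 2) := cyclotomic r (ZMod 2) with hΦ
  have hΦgeom : Φ = ∑ i ∈ Finset.range r, X ^ i := cyclotomic_prime (ZMod 2) r
  have hΦmonic : Φ.Monic := cyclotomic.monic r (ZMod 2)
  have hΦdeg : Φ.natDegree = r - 1 := by
    rw [hΦ, natDegree_cyclotomic, Nat.totient_prime hr]
  -- Step D: P = Φ
  have hPdvd : P ∣ Φ * (X - 1) := by
    have : Φ * (X - 1) = X ^ r - 1 := by rw [hΦgeom]; exact geom_sum_mul X r
    rw [this]
    exact minpoly.dvd (ZMod 2) β (by simp [hβr])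
  have hPprime : Prime P := (minpoly.irreducible hint).prime
  have hPΦ : P ∣ Φ := by
    rcases hPprime.dvd_mul.mp hPdvd with h | h
    · exact h
    · exfalso
      obtain ⟨k, hk⟩ := h
      have : aeval β (X - 1 : Polynomial (ZMod 2)) = 0 := by
        rw [hk, map_mul, minpoly.aeval, zero_mul]
      simp only [map_sub, aeval_X, map_one, sub_eq_zero] at this
      exact hβ1 this
  have hd1 : P.natDegree ≤ r - 1 := hΦdeg ▸ natDegree_le_of_dvd hPΦ (hΦmonic.ne_zero)
  -- finite subfield argument : r - 1 ∣ natDegree P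
  have hd2 : (r - 1) ∣ P.natDegree := by
    haveI := IntermediateField.adjoin.finiteDimensional hint
    set K := IntermediateField.adjoin (ZMod 2) {β} with hK
    haveI : Finite K := Module.finite_of_finite (ZMod 2)
    haveI : Fintype K := Fintype.ofFinite K
    have hcard : Fintype.card K = 2 ^ (Module.finrank (ZMod 2) K) := by
      have := Module.card_eq_pow_finrank (K := ZMod 2) (V := K)
      simpa [ZMod.card] using this
    set g : K := IntermediateField.AdjoinSimple.gen (ZMod 2) β with hg
    have hgβ : (g : F) = β := rfl
    have hg0 : g ≠ 0 := by
      intro h0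
      apply hβ0
      rw [← hgβ, h0]; rfl
    have hgpow : g ^ (Fintype.card K - 1) = 1 := FiniteField.pow_card_sub_one_eq_one g hg0
    have hβpow : β ^ (2 ^ (Module.finrank (ZMod 2) K) - 1) = 1 := by
      have := congrArg (fun x : K => (x : F)) hgpow
      simpa [hgβ, hcard] using this
    have hrdvd : r ∣ 2 ^ (Module.finrank (ZMod 2) K) - 1 := hβ.dvd_of_pow_eq_one _ hβpow
    have h2pow : (2 : ZMod r) ^ (Module.finrank (ZMod 2) K) = 1 := by
      have h0 : ((2 ^ (Module.finrank (ZMod 2) K) - 1 : ℕ) : ZMod r) = 0 :=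
        (ZMod.natCast_eq_zero_iff _ _).mpr hrdvd
      have hpos : 1 ≤ 2 ^ (Module.finrank (ZMod 2) K) := Nat.one_le_two_pow
      calc (2 : ZMod r) ^ (Module.finrank (ZMod 2) K)
          = ((2 ^ (Module.finrank (ZMod 2) K) : ℕ) : ZMod r) := by push_cast; ring
        _ = ((2 ^ (Module.finrank (ZMod 2) K) - 1 + 1 : ℕ) : ZMod r) := by
            rw [Nat.sub_add_cancel hpos]
        _ = 1 := by rw [Nat.cast_add, h0, Nat.cast_one, zero_add]
    have := orderOf_dvd_of_pow_eq_one h2pow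
    rw [hprim] at this
    rwa [IntermediateField.adjoin.finrank hint] at this
  have hdeq : P.natDegree = r - 1 := by
    have hr1 : 0 < r - 1 := by have := hr.two_le; omega
    have hpos : 0 < P.natDegree := minpoly.natDegree_pos hint
    exact Nat.le_antisymm hd1 (Nat.le_of_dvd hpos hd2)
  have hPmonic : P.Monic := minpoly.monic hint
  have hPeqΦ : P = Φ := by
    obtain ⟨k, hk⟩ := hPΦ
    have hkm : k.Monic := hPmonic.of_mul_monic_left (hk ▸ hΦmonic)
    have : Φ.natDegree = P.natDegree + k.natDegree := by
      rw [hk, hPmonic.natDegree_mul hkm]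
    rw [hΦdeg, hdeq] at this
    have hk0 : k.natDegree = 0 := by omega
    have : k = 1 := hkm.natDegree_eq_zero.mp hk0
    rw [hk, this, mul_one]
  -- Step E
  have hΦQ : Φ ∣ Q := hPeqΦ ▸ minpoly.dvd (ZMod 2) β haQ
  have hQcoeff : ∀ h < r, Q.coeff h = c h := by
    intro h hh
    rw [hQ, finset_sum_coeff]
    simp only [coeff_C_mul, coeff_X_pow]
    rw [Finset.sum_eq_single h (fun b _ hb => by simp [Ne.symm hb]) (fun habs => absurd (Finset.mem_range.mpr hh) habs)]
    simp
  have hΦcoeff : ∀ h < r, Φ.coeff h = 1 := by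
    intro h hh
    rw [hΦgeom, finset_sum_coeff]
    simp only [coeff_X_pow]
    rw [Finset.sum_eq_single h (fun b _ hb => by simp [Ne.symm hb]) (fun habs => absurd (Finset.mem_range.mpr hh) habs)]
    simp
  have hQdeg : Q.natDegree ≤ r - 1 := by
    refine natDegree_sum_le_of_forall_le _ _ fun i hi => ?_
    calc (C (c i) * X ^ i).natDegree ≤ i := by
          simpa using (natDegree_C_mul_le (c i) (X ^ i)).trans (natDegree_X_pow_le i)
      _ ≤ r - 1 := by have := Finset.mem_range.mp hi; omega
  obtain ⟨a, ha⟩ : ∃ a : ZMod 2, ∀ h < r, c h = a := by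
    obtain ⟨k, hk⟩ := hΦQ
    by_cases hk0 : k = 0
    · exact ⟨0, fun h hh => by rw [← hQcoeff h hh, hk, hk0, mul_zero, coeff_zero]⟩
    · have hdegk : k.natDegree = 0 := by
        have := natDegree_mul (hΦmonic.ne_zero) hk0
        rw [← hk, hΦdeg] at this
        omega
      obtain ⟨b, rfl⟩ := natDegree_eq_zero.mp hdegk
      refine ⟨b, fun h hh => ?_⟩
      rw [← hQcoeff h hh, hk, coeff_mul_C, hΦcoeff h hh, one_mul]
  -- Step F
  have hsum : ∑ n ∈ Finset.range T, s n = a := by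
    rw [hT, sum_range_mul_eq]
    have : ∀ h ∈ Finset.range r, (∑ j ∈ Finset.range m, s (h + j * r)) = a := fun h hh =>
      ha h (Finset.mem_range.mp hh)
    rw [Finset.sum_congr rfl this, Finset.sum_const, Finset.card_range]
    obtain ⟨t, ht⟩ := hodd
    rw [nsmul_eq_mul, ht]
    push_cast
    simp [show (2 : ZMod 2) = 0 by decide]
  intro h hh
  have : h < r := by have := hr.two_le; omega
  rw [hsum]
  exact ha h this
end

section
/- Let (sₙ) be a T-periodic sequence over 𝔽₂ and S(X) = Σₙ₌₀^{T-1} sₙXⁿ. Then the linear complexity of (sₙ) equals T - deg(gcd(X^T - 1, S(X))). -/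
open Polynomial Finset

namespace LCAux

abbrev F := ZMod 2

lemma Fone {a : F} (h : a ≠ 0) : a = 1 := by revert h; revert a; decide

noncomputable def Spoly (s : ℕ → F) (T : ℕ) : F[X] := ∑ n ∈ Finset.range T, C (s n) * X ^ n

lemma coeff_Spoly (s : ℕ → F) (T k : ℕ) :
    (Spoly s T).coeff k = if k < T then s k else 0 := by
  rw [Spoly, finset_sum_coeff]
  simp only [coeff_C_mul, coeff_X_pow, mul_ite, mul_one, mul_zero]
  rw [Finset.sum_ite_eq (Finset.range T) k s]
  simp [Finset.mem_range]

lemma natDegree_Spoly_le (s : ℕ → F) (T : ℕ) (hT : 0 < T) :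
    (Spoly s T).natDegree ≤ T - 1 := by
  rw [natDegree_le_iff_coeff_eq_zero]
  intro N hN
  rw [coeff_Spoly, if_neg (by omega)]

lemma s_mod (s : ℕ → F) (T : ℕ) (hT : 0 < T) (hper : ∀ n, s (n + T) = s n) (n : ℕ) :
    s n = s (n % T) := by
  induction n using Nat.strong_induction_on with
  | _ n ih =>
    rcases lt_or_ge n T with h | h
    · rw [Nat.mod_eq_of_lt h]
    · have h1 : n - T + T = n := Nat.sub_add_cancel h
      have h2 := hper (n - T)
      rw [h1] at h2
      rw [h2, ih (n - T) (by omega), Nat.mod_eq_sub_mod h]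

lemma P_mul_Spoly (s : ℕ → F) (T : ℕ) (hT : 0 < T) (hper : ∀ n, s (n + T) = s n) :
    ((X : F[X]) ^ T - 1) * Spoly s T = Spoly s (2 * T) := by
  ext k
  rw [sub_mul, one_mul, coeff_sub, CharTwo.sub_eq_add, coeff_X_pow_mul' (Spoly s T) T k]
  simp only [coeff_Spoly]
  rcases lt_or_ge k T with h | h
  · rw [if_neg (not_le.mpr h), if_pos h, if_pos (by omega), zero_add]
  · rw [if_pos h, if_neg (not_lt.mpr h), add_zero]
    rcases lt_or_ge k (2 * T) with h2 | h2
    · rw [if_pos (show k - T < T by omega), if_pos h2]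
      have := hper (k - T)
      rw [show k - T + T = k by omega] at this
      exact this.symm
    · rw [if_neg (show ¬ k - T < T by omega), if_neg (not_lt.mpr h2)]

lemma reflect_sum {ι : Type*} (G : Finset ι) (g : ι → F[X]) (N : ℕ) :
    reflect N (∑ i ∈ G, g i) = ∑ i ∈ G, reflect N (g i) := by
  classical
  induction G using Finset.induction_on with
  | empty => simp [reflect_zero]
  | insert _ _ h ih => rw [Finset.sum_insert h, Finset.sum_insert h, reflect_add, ih]

lemma reflect_eq_sum (f : F[X]) (L : ℕ) (hf : f.natDegree ≤ L) :
    reflect L f = ∑ j ∈ Finset.range (L + 1), C (f.coeff j) * X ^ (L - j) := by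
  conv_lhs => rw [as_sum_range' f (L + 1) (lt_of_le_of_lt hf (Nat.lt_succ_self L))]
  rw [reflect_sum]
  refine Finset.sum_congr rfl fun j hj => ?_
  rw [← C_mul_X_pow_eq_monomial, reflect_C_mul_X_pow,
    revAt_le (by simpa [Nat.lt_succ_iff] using hj)]

lemma coeff_reflect_mul (f : F[X]) (L : ℕ) (hf : f.natDegree ≤ L) (B : F[X]) (n : ℕ) :
    (reflect L f * B).coeff (n + L) = ∑ j ∈ Finset.range (L + 1), f.coeff j * B.coeff (n + j) := by
  rw [reflect_eq_sum f L hf, Finset.sum_mul, finset_sum_coeff]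
  refine Finset.sum_congr rfl fun j hj => ?_
  have hjL : j ≤ L := by simpa [Nat.lt_succ_iff] using hj
  rw [mul_assoc, coeff_C_mul, coeff_X_pow_mul' B (L - j) (n + L), if_pos (by omega),
    show n + L - (L - j) = n + j by omega]

lemma natDegree_reflect_le (f : F[X]) (L : ℕ) (hf : f.natDegree ≤ L) :
    (reflect L f).natDegree ≤ L := by
  rw [natDegree_le_iff_coeff_eq_zero]
  intro N hN
  rw [coeff_reflect, revAt_eq_self_of_lt hN]
  exact coeff_eq_zero_of_natDegree_lt (lt_of_le_of_lt hf hN)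

lemma Pmonic (T : ℕ) (hT : 0 < T) : ((X : F[X]) ^ T - 1).Monic := by
  simpa using monic_X_pow_sub_C (1 : F) (by omega : T ≠ 0)

lemma PnatDegree (T : ℕ) : ((X : F[X]) ^ T - 1).natDegree = T := by
  simpa using (natDegree_X_pow_sub_C (n := T) (r := (1 : F)))

lemma Pne (T : ℕ) (hT : 0 < T) : ((X : F[X]) ^ T - 1) ≠ 0 := (Pmonic T hT).ne_zero

lemma sq_P (T : ℕ) : ((X : F[X]) ^ T - 1) ^ 2 = X ^ (2 * T) - 1 := by
  rw [CharTwo.sub_eq_add, CharTwo.sub_eq_add, CharTwo.add_sq, one_pow, ← pow_mul, mul_comm T 2]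

lemma dvd_iff_coeffs (A : F[X]) (T L : ℕ) (hT : 0 < T) (hL : 1 ≤ L) (hLT : L ≤ T)
    (hdeg : A.natDegree < L + T) :
    ((X : F[X]) ^ T - 1) ∣ A ↔
      ∀ n < T, (((X : F[X]) ^ T - 1) * A).coeff (n + L) = 0 := by
  constructor
  · rintro ⟨B, rfl⟩
    intro n hn
    rw [← mul_assoc, ← sq, sq_P, sub_mul, one_mul, coeff_sub,
      coeff_X_pow_mul' B (2 * T) (n + L), if_neg (by omega)]
    by_cases hB : B = 0
    · simp [hB]
    · have hdB : B.natDegree < L := by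
        have h2 := natDegree_mul (Pne T hT) hB
        rw [PnatDegree] at h2
        omega
      rw [coeff_eq_zero_of_natDegree_lt (by omega), zero_sub, neg_zero]
  · intro h
    set R := A %ₘ ((X : F[X]) ^ T - 1) with hR
    set Q := A /ₘ ((X : F[X]) ^ T - 1) with hQdef
    have hA : A = ((X : F[X]) ^ T - 1) * Q + R := by
      rw [add_comm]; exact (modByMonic_add_div A ((X : F[X]) ^ T - 1)).symm
    have hdR : R.degree < (T : WithBot ℕ) := by
      have := degree_modByMonic_lt A (Pmonic T hT)
      rwa [degree_eq_natDegree (Pne T hT), PnatDegree] at this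
    have hRge : ∀ j, T ≤ j → R.coeff j = 0 := fun j hj =>
      coeff_eq_zero_of_degree_lt (lt_of_lt_of_le hdR (by exact_mod_cast hj))
    have hQdeg : Q.natDegree < L := by
      rw [hQdef, natDegree_divByMonic A (Pmonic T hT), PnatDegree]
      omega
    have hcoeff : ∀ n < T, (((X : F[X]) ^ T - 1) * A).coeff (n + L) =
        (if T ≤ n + L then R.coeff (n + L - T) else 0) + R.coeff (n + L) := by
      intro n hn
      rw [hA, mul_add, coeff_add, ← mul_assoc, ← sq, sq_P, sub_mul, one_mul, coeff_sub,
        coeff_X_pow_mul' Q (2 * T) (n + L), if_neg (by omega),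
        coeff_eq_zero_of_natDegree_lt (show Q.natDegree < n + L by omega), zero_sub, neg_zero,
        zero_add, sub_mul, one_mul, coeff_sub, CharTwo.sub_eq_add,
        coeff_X_pow_mul' R T (n + L)]
    have hRlt : ∀ j < T, R.coeff j = 0 := by
      intro j hj
      rcases lt_or_ge j L with hjL | hjL
      · have hn : T - L + j < T := by omega
        have h0 := h _ hn
        rw [hcoeff _ hn, if_pos (by omega), show T - L + j + L - T = j by omega,
          hRge (T - L + j + L) (by omega), add_zero] at h0
        exact h0
      · have hn : j - L < T := by omega
        have h0 := h _ hn
        rw [hcoeff _ hn, if_neg (by omega), show j - L + L = j by omega, zero_add] at h0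
        exact h0
    have hR0 : R = 0 := by
      ext j
      rcases lt_or_ge j T with hj | hj
      · simpa using hRlt j hj
      · simpa using hRge j hj
    exact ⟨Q, by rw [hA, hR0, add_zero]⟩

lemma rec_iff_coeffs (s : ℕ → F) (T : ℕ) (hT : 0 < T) (hper : ∀ n, s (n + T) = s n)
    (f : F[X]) (L : ℕ) (hf : f.natDegree ≤ L) (hLT : L ≤ T) :
    (∀ n, ∑ j ∈ Finset.range (L + 1), f.coeff j * s (n + j) = 0) ↔
    ∀ n < T, (((X : F[X]) ^ T - 1) * (reflect L f * Spoly s T)).coeff (n + L) = 0 := by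
  have key : ∀ n < T, (((X : F[X]) ^ T - 1) * (reflect L f * Spoly s T)).coeff (n + L)
      = ∑ j ∈ Finset.range (L + 1), f.coeff j * s (n + j) := by
    intro n hn
    rw [mul_left_comm, P_mul_Spoly s T hT hper, coeff_reflect_mul f L hf _ n]
    refine Finset.sum_congr rfl fun j hj => ?_
    have hjL : j ≤ L := by simpa [Nat.lt_succ_iff] using hj
    rw [coeff_Spoly, if_pos (by omega)]
  constructor
  · intro h n hn; rw [key n hn]; exact h n
  · intro h n
    have hmod : ∀ j, s (n + j) = s (n % T + j) := by
      intro j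
      rw [s_mod s T hT hper (n + j), s_mod s T hT hper (n % T + j), Nat.mod_add_mod]
    calc ∑ j ∈ Finset.range (L + 1), f.coeff j * s (n + j)
        = ∑ j ∈ Finset.range (L + 1), f.coeff j * s (n % T + j) :=
          Finset.sum_congr rfl fun j _ => by rw [hmod j]
      _ = 0 := by rw [← key (n % T) (Nat.mod_lt n hT)]; exact h _ (Nat.mod_lt n hT)

/-- Combined form: recurrence with characteristic coefficients `f` of order `L` holds
iff `X^T - 1` divides `reflect L f * S`. -/
lemma rec_iff_dvd (s : ℕ → F) (T : ℕ) (hT : 0 < T) (hper : ∀ n, s (n + T) = s n)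
    (f : F[X]) (L : ℕ) (hf : f.natDegree ≤ L) (hL : 1 ≤ L) (hLT : L ≤ T) :
    (∀ n, ∑ j ∈ Finset.range (L + 1), f.coeff j * s (n + j) = 0) ↔
    ((X : F[X]) ^ T - 1) ∣ reflect L f * Spoly s T := by
  rw [rec_iff_coeffs s T hT hper f L hf hLT]
  refine (dvd_iff_coeffs (reflect L f * Spoly s T) T L hT hL hLT ?_).symm
  have h1 := natDegree_reflect_le f L hf
  have h2 := natDegree_Spoly_le s T hT
  have h3 := natDegree_mul_le (p := reflect L f) (q := Spoly s T)
  omega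

end LCAux


open LCAux

/-- The linear complexity of a binary sequence: the least `L` such that the sequence
satisfies a linear recurrence of order `L` over `𝔽₂`. -/
noncomputable def LinearComplexity (s : ℕ → ZMod 2) : ℕ :=
  sInf {L : ℕ | ∃ c : ℕ → ZMod 2, ∀ n : ℕ,
    s (n + L) = ∑ i ∈ Finset.range L, c i * s (n + i)}

theorem linearComplexity_eq_period_sub_gcd_degree (s : ℕ → ZMod 2) (T : ℕ) (hT : 0 < T)
    (hper : ∀ n, s (n + T) = s n) :
    LinearComplexity s =
      T - (EuclideanDomain.gcd ((X : Polynomial (ZMod 2)) ^ T - 1)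
        (∑ n ∈ Finset.range T, C (s n) * X ^ n)).natDegree := by
  show LinearComplexity s =
      T - (EuclideanDomain.gcd ((X : F[X]) ^ T - 1) (Spoly s T)).natDegree
  by_cases hS : Spoly s T = 0
  · have hz : ∀ n, s n = 0 := by
      intro n
      have h1 := coeff_Spoly s T (n % T)
      rw [hS, coeff_zero, if_pos (Nat.mod_lt n hT)] at h1
      rw [s_mod s T hT hper n]
      exact h1.symm
    have hmem : 0 ∈ {L : ℕ | ∃ c : ℕ → ZMod 2, ∀ n : ℕ,
        s (n + L) = ∑ i ∈ Finset.range L, c i * s (n + i)} :=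
      ⟨fun _ => 0, fun n => by simp [hz]⟩
    rw [LinearComplexity, Nat.sInf_eq_zero.mpr (Or.inl hmem), hS,
      EuclideanDomain.gcd_zero_right, PnatDegree]
    omega
  · set g := EuclideanDomain.gcd ((X : F[X]) ^ T - 1) (Spoly s T) with hgdef
    have hgP : g ∣ ((X : F[X]) ^ T - 1) := EuclideanDomain.gcd_dvd_left _ _
    have hgS : g ∣ Spoly s T := EuclideanDomain.gcd_dvd_right _ _
    have hg0 : g ≠ 0 := fun h => Pne T hT (eq_zero_of_zero_dvd (h ▸ hgP))
    have hdS := natDegree_Spoly_le s T hT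
    have hd : g.natDegree < T := by
      have := natDegree_le_of_dvd hgS hS
      omega
    set q := ((X : F[X]) ^ T - 1) / g with hqdef
    have hq : g * q = (X : F[X]) ^ T - 1 := EuclideanDomain.mul_div_cancel' hg0 hgP
    have hq0 : q ≠ 0 := fun h => Pne T hT (by rw [← hq, h, mul_zero])
    have hqdeg : q.natDegree = T - g.natDegree := by
      have h2 := natDegree_mul hg0 hq0
      rw [hq, PnatDegree] at h2
      omega
    set L0 := T - g.natDegree with hL0
    have hL01 : 1 ≤ L0 := by omega
    have hL0T : L0 ≤ T := by omega
    have hq0coeff : q.coeff 0 = 1 := by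
      have hx : ((X : F[X]) ^ T - 1).coeff 0 ≠ 0 := by
        rw [coeff_sub, coeff_one, coeff_X_pow, if_neg (by omega), if_pos rfl]
        decide
      apply Fone
      intro h0
      exact hx (X_dvd_iff.mp (dvd_trans (X_dvd_iff.mpr h0) ⟨g, by rw [← hq]; ring⟩))
    set S' := Spoly s T / g with hS'def
    have hS' : g * S' = Spoly s T := EuclideanDomain.mul_div_cancel' hg0 hgS
    obtain ⟨a, b, hab⟩ : ∃ a b : F[X], q * a + S' * b = 1 := by
      refine ⟨EuclideanDomain.gcdA ((X : F[X]) ^ T - 1) (Spoly s T),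
        EuclideanDomain.gcdB ((X : F[X]) ^ T - 1) (Spoly s T), ?_⟩
      have hbez := EuclideanDomain.gcd_eq_gcd_ab ((X : F[X]) ^ T - 1) (Spoly s T)
      refine mul_left_cancel₀ hg0 ?_
      rw [mul_add, ← mul_assoc, hq, ← mul_assoc, hS', mul_one]
      exact hbez.symm
    have hmem : L0 ∈ {L : ℕ | ∃ c : ℕ → ZMod 2, ∀ n : ℕ,
        s (n + L) = ∑ i ∈ Finset.range L, c i * s (n + i)} := by
      set f := reflect L0 q with hfdef
      have hfdeg : f.natDegree ≤ L0 := natDegree_reflect_le q L0 (le_of_eq hqdeg)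
      have hrr : reflect L0 f = q := by
        ext i
        rw [coeff_reflect, coeff_reflect, revAt_invol]
      have hdvd : ((X : F[X]) ^ T - 1) ∣ reflect L0 f * Spoly s T := by
        rw [hrr]
        exact ⟨S', by rw [← hS', ← hq]; ring⟩
      have hrec := (rec_iff_dvd s T hT hper f L0 hfdeg hL01 hL0T).mpr hdvd
      refine ⟨fun i => -(f.coeff i), fun n => ?_⟩
      have h0 := hrec n
      rw [Finset.sum_range_succ] at h0
      have hfL : f.coeff L0 = 1 := by
        rw [hfdef, coeff_reflect, revAt_le (le_refl L0), Nat.sub_self, hq0coeff]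
      rw [hfL, one_mul] at h0
      have h1 := eq_neg_of_add_eq_zero_right h0
      rw [h1, ← Finset.sum_neg_distrib]
      exact Finset.sum_congr rfl fun i _ => by ring
    have hlb : ∀ L ∈ {L : ℕ | ∃ c : ℕ → ZMod 2, ∀ n : ℕ,
        s (n + L) = ∑ i ∈ Finset.range L, c i * s (n + i)}, L0 ≤ L := by
      rintro L ⟨c, hc⟩
      rcases Nat.eq_zero_or_pos L with rfl | hL1
      · exfalso
        apply hS
        have hz : ∀ n, s n = 0 := fun n => by simpa using hc n
        ext k
        rw [coeff_Spoly]
        simp [hz]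
      rcases le_or_gt L T with hLT' | hLT'
      · set f : F[X] := X ^ L - ∑ i ∈ Finset.range L, C (c i) * X ^ i with hfdef
        have hsum_coeff : ∀ k, (∑ i ∈ Finset.range L, C (c i) * X ^ i).coeff k
            = if k < L then c k else 0 := by
          intro k
          rw [finset_sum_coeff]
          simp only [coeff_C_mul, coeff_X_pow, mul_ite, mul_one, mul_zero]
          rw [Finset.sum_ite_eq (Finset.range L) k c]
          simp [Finset.mem_range]
        have hfL : f.coeff L = 1 := by
          rw [hfdef, coeff_sub, coeff_X_pow, if_pos rfl, hsum_coeff, if_neg (lt_irrefl L),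
            sub_zero]
        have hfj : ∀ j < L, f.coeff j = -(c j) := by
          intro j hj
          rw [hfdef, coeff_sub, coeff_X_pow, if_neg (by omega), hsum_coeff, if_pos hj, zero_sub]
        have hfdeg : f.natDegree ≤ L := by
          rw [natDegree_le_iff_coeff_eq_zero]
          intro N hN
          rw [hfdef, coeff_sub, coeff_X_pow, if_neg (by omega), hsum_coeff, if_neg (by omega),
            sub_zero]
        have hrec : ∀ n, ∑ j ∈ Finset.range (L + 1), f.coeff j * s (n + j) = 0 := by
          intro n
          rw [Finset.sum_range_succ, hfL, one_mul]
          have hstep : ∑ j ∈ Finset.range L, f.coeff j * s (n + j)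
              = ∑ j ∈ Finset.range L, -(c j) * s (n + j) :=
            Finset.sum_congr rfl fun j hj => by rw [hfj j (Finset.mem_range.mp hj)]
          rw [hstep, hc n, ← Finset.sum_add_distrib]
          exact Finset.sum_eq_zero fun j _ => by ring
        have hdvd := (rec_iff_dvd s T hT hper f L hfdeg hL1 hLT').mp hrec
        obtain ⟨t, ht⟩ := hdvd
        rw [← hS', ← hq] at ht
        have hqd : q ∣ reflect L f * S' := by
          refine ⟨t, mul_left_cancel₀ hg0 ?_⟩
          calc g * (reflect L f * S') = reflect L f * (g * S') := by ring
            _ = g * q * t := ht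
            _ = g * (q * t) := by ring
        have hqf : q ∣ reflect L f := by
          have hsplit : reflect L f = q * (reflect L f * a) + reflect L f * S' * b := by
            calc reflect L f = reflect L f * 1 := (mul_one _).symm
              _ = reflect L f * (q * a + S' * b) := by rw [hab]
              _ = q * (reflect L f * a) + reflect L f * S' * b := by ring
          rw [hsplit]
          exact dvd_add (dvd_mul_right q _) (hqd.mul_right b)
        have hne : reflect L f ≠ 0 := by
          intro h
          have h2 : (reflect L f).coeff 0 = 0 := by rw [h]; simp
          rw [coeff_reflect, revAt_le (Nat.zero_le L), Nat.sub_zero, hfL] at h2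
          exact one_ne_zero h2
        have := natDegree_le_of_dvd hqf hne
        have h3 := natDegree_reflect_le f L hfdeg
        omega
      · omega
    rw [LinearComplexity]
    have hle : sInf {L : ℕ | ∃ c : ℕ → ZMod 2, ∀ n : ℕ,
        s (n + L) = ∑ i ∈ Finset.range L, c i * s (n + i)} = L0 :=
      le_antisymm (Nat.sInf_le hmem) (le_csInf ⟨L0, hmem⟩ hlb)
    rw [hle]
end

section
/- Let p ≥ 5 be prime and let q₀ < q₁ < ... be the quadratic residues mod p in increasing order. Define tₙ = 1 if qₙ₊₁ = qₙ + 1 and tₙ = 0 otherwise, for 0 ≤ n ≤ (p-5)/2. Then the number of n with tₙ = 1 equals (p-3)/4 if p ≡ 3 (mod 4) and (p-5)/4 if p ≡ 1 (mod 4). -/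
open Finset


private lemma cardB (p : ℕ) [Fact p.Prime] (hp5 : 5 ≤ p)
    [DecidablePred (IsSquare : ZMod p → Prop)] :
    ((Finset.univ : Finset (ZMod p)).filter
      (fun b => b ≠ 0 ∧ b ≠ -1 ∧ IsSquare b ∧ IsSquare (b + 1))).card =
    if p % 4 = 3 then (p - 3) / 4 else (p - 5) / 4 := by
  have hp : p.Prime := Fact.out
  have hchar : ringChar (ZMod p) ≠ 2 := by
    rw [ZMod.ringChar_zmod_n]; omega
  have hcardF : Fintype.card (ZMod p) = p := ZMod.card p
  set χ := quadraticChar (ZMod p) with hχ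
  have hsum0 : ∑ a : ZMod p, χ a = 0 := quadraticChar_sum_zero hchar
  have hne10 : (-1 : ZMod p) ≠ 0 := neg_ne_zero.mpr one_ne_zero
  set s : Finset (ZMod p) := (Finset.univ.erase 0).erase (-1) with hs
  have hmem : ∀ b : ZMod p, b ∈ s ↔ b ≠ -1 ∧ b ≠ 0 := by
    intro b; simp [hs, Finset.mem_erase]
  have hscard : s.card = p - 2 := by
    rw [hs, Finset.card_erase_of_mem, Finset.card_erase_of_mem (Finset.mem_univ 0),
      Finset.card_univ, hcardF]
    · rfl
    · exact Finset.mem_erase.mpr ⟨hne10, Finset.mem_univ _⟩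
  have hχ0 : χ 0 = 0 := by simp [hχ]
  have hχ1 : χ 1 = 1 := by simp [hχ]
  set Q : ZMod p → Prop := fun b => IsSquare b ∧ IsSquare (b + 1) with hQ
  have hBs : (Finset.univ : Finset (ZMod p)).filter
      (fun b => b ≠ 0 ∧ b ≠ -1 ∧ IsSquare b ∧ IsSquare (b + 1)) = s.filter Q := by
    ext b; simp only [Finset.mem_filter, Finset.mem_univ, true_and, hmem, hQ]; tauto
  -- term computation
  have hterm : ∀ b ∈ s, (1 + χ b) * (1 + χ (b + 1)) = if Q b then 4 else 0 := by
    intro b hb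
    rw [hmem] at hb
    obtain ⟨hb1, hb0⟩ := hb
    have hb1' : b + 1 ≠ 0 := fun h => hb1 (eq_neg_of_add_eq_zero_left h)
    by_cases h1 : IsSquare b
    · have e1 := (quadraticChar_one_iff_isSquare hb0).mpr h1
      by_cases h2 : IsSquare (b + 1)
      · have e2 := (quadraticChar_one_iff_isSquare hb1').mpr h2
        rw [if_pos ⟨h1, h2⟩, e1, e2]; norm_num
      · have e2 := quadraticChar_neg_one_iff_not_isSquare.mpr h2
        simp [hQ, h1, h2, hχ, e1, e2]
    · have e1 := quadraticChar_neg_one_iff_not_isSquare.mpr h1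
      simp [hQ, h1, hχ, e1]
  have key : (4 : ℤ) * (s.filter Q).card = ∑ b ∈ s, (1 + χ b) * (1 + χ (b + 1)) := by
    rw [Finset.sum_congr rfl hterm, ← Finset.sum_filter, Finset.sum_const]
    push_cast; ring
  -- the auxiliary target set
  set tt : Finset (ZMod p) := (Finset.univ.erase 1).erase 0 with htt
  have httmem : ∀ c : ZMod p, c ∈ tt ↔ c ≠ 0 ∧ c ≠ 1 := by
    intro c; simp [htt, Finset.mem_erase]
  have htsum : ∑ c ∈ tt, χ c = -1 := by
    rw [htt, Finset.sum_erase_eq_sub (Finset.mem_erase.mpr ⟨zero_ne_one, Finset.mem_univ _⟩),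
      Finset.sum_erase_eq_sub (Finset.mem_univ 1), hsum0, hχ0, hχ1]
    ring
  have S1 : ∑ _b ∈ s, (1 : ℤ) = (p : ℤ) - 2 := by
    rw [Finset.sum_const, hscard, nsmul_eq_mul, mul_one]; omega
  have S2 : ∑ b ∈ s, χ b = -χ (-1) := by
    rw [hs, Finset.sum_erase_eq_sub (Finset.mem_erase.mpr ⟨hne10, Finset.mem_univ _⟩),
      Finset.sum_erase_eq_sub (Finset.mem_univ 0), hsum0, hχ0]
    ring
  have S3 : ∑ b ∈ s, χ (b + 1) = -1 := by
    rw [← htsum]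
    refine Finset.sum_nbij' (fun b => b + 1) (fun c => c - 1) ?_ ?_ ?_ ?_ ?_
    · intro a ha; rw [hmem] at ha; rw [httmem]
      constructor
      · intro h; exact ha.1 (eq_neg_of_add_eq_zero_left h)
      · intro h; exact ha.2 (by linear_combination h)
    · intro c hc; rw [httmem] at hc; rw [hmem]
      constructor
      · intro h; exact hc.1 (by linear_combination h)
      · intro h; exact hc.2 (by linear_combination h)
    · intro a _; ring
    · intro c _; ring
    · intro a _; rfl
  have S4 : ∑ b ∈ s, χ b * χ (b + 1) = -1 := by
    have hre : ∀ b ∈ s, χ b * χ (b + 1) = χ (1 + b⁻¹) := by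
      intro b hb
      rw [hmem] at hb
      have hb0 : b ≠ 0 := hb.2
      have hbe : b + 1 = b * (1 + b⁻¹) := by field_simp
      rw [hbe, map_mul, ← mul_assoc, ← pow_two, quadraticChar_sq_one hb0, one_mul]
    rw [Finset.sum_congr rfl hre, ← htsum]
    refine Finset.sum_nbij' (fun b => 1 + b⁻¹) (fun c => (c - 1)⁻¹) ?_ ?_ ?_ ?_ ?_
    · intro a ha; rw [hmem] at ha; rw [httmem]
      have ha0 : a⁻¹ ≠ 0 := inv_ne_zero ha.2
      constructor
      · intro h
        have : a⁻¹ = -1 := by linear_combination h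
        exact ha.1 (by rw [inv_eq_iff_eq_inv.mp this]; exact inv_neg_one)
      · intro h
        exact ha0 (by linear_combination h)
    · intro c hc; rw [httmem] at hc; rw [hmem]
      have hc1 : c - 1 ≠ 0 := fun h => hc.2 (by linear_combination h)
      constructor
      · intro h
        have h2 : c - 1 = -1 := by rw [inv_eq_iff_eq_inv.mp h]; exact inv_neg_one
        exact hc.1 (by linear_combination h2)
      · exact fun h => hc1 (inv_eq_zero.mp h)
    · intro a ha
      show (1 + a⁻¹ - 1)⁻¹ = a
      rw [add_sub_cancel_left, inv_inv]
    · intro c hc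
      show 1 + ((c - 1)⁻¹)⁻¹ = c
      rw [inv_inv]; ring
    · intro a _; rfl
  have hexp : ∑ b ∈ s, (1 + χ b) * (1 + χ (b + 1)) =
      (∑ _b ∈ s, (1 : ℤ)) + (∑ b ∈ s, χ b) + (∑ b ∈ s, χ (b + 1)) +
        ∑ b ∈ s, χ b * χ (b + 1) := by
    rw [← Finset.sum_add_distrib, ← Finset.sum_add_distrib, ← Finset.sum_add_distrib]
    exact Finset.sum_congr rfl fun b _ => by ring
  have hχ4 : χ (-1) = ZMod.χ₄ p := by
    rw [hχ, quadraticChar_neg_one hchar, hcardF]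
  have hodd : p % 2 = 1 := Nat.odd_iff.mp (hp.odd_of_ne_two (by omega))
  have htot : (4 : ℤ) * (s.filter Q).card = (p : ℤ) - 4 - χ (-1) := by
    rw [key, hexp, S1, S2, S3, S4]; ring
  rw [hBs]
  have h14 : p % 4 = 1 ∨ p % 4 = 3 := by omega
  rcases h14 with h | h
  · have hv : χ (-1) = 1 := by
      rw [hχ4, ZMod.χ₄_nat_eq_if_mod_four]
      simp [hodd, h]
    rw [hv] at htot
    rw [if_neg (by omega)]
    omega
  · have hv : χ (-1) = -1 := by
      rw [hχ4, ZMod.χ₄_nat_eq_if_mod_four]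
      simp [hodd, h]
    rw [hv] at htot
    rw [if_pos h]
    omega


private lemma qr_iff (p : ℕ) [Fact p.Prime] {m : ℕ} (hm : m < p) :
    (∃ x : ℕ, x ^ 2 % p = m) ↔ IsSquare (m : ZMod p) := by
  haveI : NeZero p := ⟨(Fact.out : p.Prime).ne_zero⟩
  constructor
  · rintro ⟨x, hx⟩
    refine ⟨(x : ZMod p), ?_⟩
    rw [← hx, ZMod.natCast_mod]
    push_cast
    ring
  · rintro ⟨y, hy⟩
    refine ⟨y.val, ?_⟩
    have h1 : ((y.val ^ 2 % p : ℕ) : ZMod p) = (m : ZMod p) := by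
      rw [ZMod.natCast_mod, hy]
      push_cast
      rw [ZMod.natCast_rightInverse y]
      ring
    have h2 := congrArg ZMod.val h1
    rwa [ZMod.val_cast_of_lt (Nat.mod_lt _ (Fact.out : p.Prime).pos),
      ZMod.val_cast_of_lt hm] at h2

theorem count_tn_eq_one (p : ℕ) (hp : p.Prime) (hp5 : 5 ≤ p) (q : ℕ → ℕ)
    (hmono : ∀ i j : ℕ, i < j → j ≤ (p - 3) / 2 → q i < q j)
    (hbij : ∀ m : ℕ, (1 ≤ m ∧ m ≤ p - 1 ∧ ∃ x : ℕ, x ^ 2 % p = m) ↔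
      ∃ n ≤ (p - 3) / 2, q n = m)
    (t : ℕ → ℕ) (ht : ∀ n ≤ (p - 5) / 2, t n = if q (n + 1) = q n + 1 then 1 else 0) :
    ((Finset.range ((p - 3) / 2)).filter (fun n => t n = 1)).card =
      if p % 4 = 3 then (p - 3) / 4 else (p - 5) / 4 := by
  haveI : Fact p.Prime := ⟨hp⟩
  haveI : NeZero p := ⟨hp.ne_zero⟩
  haveI : DecidablePred (IsSquare : ZMod p → Prop) := Classical.decPred _
  have hodd : p % 2 = 1 := Nat.odd_iff.mp (hp.odd_of_ne_two (by omega))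
  -- step 1: rewrite the filter using ht
  have h1 : (Finset.range ((p - 3) / 2)).filter (fun n => t n = 1) =
      (Finset.range ((p - 3) / 2)).filter (fun n => q (n + 1) = q n + 1) := by
    apply Finset.filter_congr
    intro n hn
    rw [Finset.mem_range] at hn
    rw [ht n (by omega)]
    split <;> simp [*]
  -- basic facts about q
  have hq : ∀ n, n ≤ (p - 3) / 2 → 1 ≤ q n ∧ q n ≤ p - 1 ∧ ∃ x : ℕ, x ^ 2 % p = q n :=
    fun n hn => (hbij (q n)).mpr ⟨n, hn, rfl⟩
  have hinj : ∀ a b : ℕ, a < p → b < p → (a : ZMod p) = (b : ZMod p) → a = b := by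
    intro a b ha hb h
    have := congrArg ZMod.val h
    rwa [ZMod.val_cast_of_lt ha, ZMod.val_cast_of_lt hb] at this
  have hm1 : ((p - 1 : ℕ) : ZMod p) = -1 := by
    rw [Nat.cast_sub (by omega), ZMod.natCast_self, Nat.cast_one, zero_sub]
  have hqmono : ∀ n m : ℕ, n ≤ (p - 3) / 2 → m ≤ (p - 3) / 2 → q n < q m → n < m := by
    intro n m hn hm hlt
    by_contra hc
    push_neg at hc
    rcases Nat.lt_or_ge m n with h | h
    · exact absurd (hmono m n h hn) (by omega)
    · have : m = n := by omega
      subst this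
      omega
  -- step 2: bijection with the ZMod p set
  have h2 : ((Finset.range ((p - 3) / 2)).filter (fun n => q (n + 1) = q n + 1)).card =
      ((Finset.univ : Finset (ZMod p)).filter
        (fun b => b ≠ 0 ∧ b ≠ -1 ∧ IsSquare b ∧ IsSquare (b + 1))).card := by
    apply Finset.card_bij (fun n _ => ((q n : ℕ) : ZMod p))
    · intro n hn
      rw [Finset.mem_filter, Finset.mem_range] at hn
      obtain ⟨hn1, hn2⟩ := hn
      have hn' : n ≤ (p - 3) / 2 := by omega
      have hn1' : n + 1 ≤ (p - 3) / 2 := by omega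
      obtain ⟨ha1, ha2, ha3⟩ := hq n hn'
      obtain ⟨hb1, hb2, hb3⟩ := hq (n + 1) hn1'
      have haup : q n ≤ p - 2 := by omega
      rw [Finset.mem_filter]
      refine ⟨Finset.mem_univ _, ?_, ?_, ?_, ?_⟩
      · intro h
        rw [show (0 : ZMod p) = ((0 : ℕ) : ZMod p) by simp] at h
        have := hinj _ _ (by omega) (by omega) h
        omega
      · intro h
        rw [← hm1] at h
        have := hinj _ _ (by omega) (by omega) h
        omega
      · exact (qr_iff p (by omega)).mp ha3
      · have : ((q n : ℕ) : ZMod p) + 1 = ((q (n + 1) : ℕ) : ZMod p) := by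
          rw [hn2]; push_cast; ring
        rw [this]
        exact (qr_iff p (by omega)).mp hb3
    · intro n hn m hm h
      rw [Finset.mem_filter, Finset.mem_range] at hn hm
      have hqn := hq n (by omega)
      have hqm := hq m (by omega)
      have := hinj _ _ (by omega) (by omega) h
      by_contra hc
      rcases Nat.lt_or_ge n m with h' | h'
      · exact absurd (hmono n m h' (by omega)) (by omega)
      · have : m < n := by omega
        exact absurd (hmono m n this (by omega)) (by omega)
    · intro b hb
      rw [Finset.mem_filter] at hb
      obtain ⟨-, hb0, hbm1, hbsq, hbsq1⟩ := hb
      set a := b.val with hav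
      have hap : a < p := ZMod.val_lt b
      have hcast : ((a : ℕ) : ZMod p) = b := ZMod.natCast_rightInverse b
      have ha0 : a ≠ 0 := fun h => hb0 (by rw [← hcast, h]; simp)
      have ham1 : a ≠ p - 1 := fun h => hbm1 (by rw [← hcast, h, hm1])
      have hqa : ∃ x : ℕ, x ^ 2 % p = a := by
        rw [qr_iff p hap, hcast]; exact hbsq
      have hqa1 : ∃ x : ℕ, x ^ 2 % p = a + 1 := by
        rw [qr_iff p (by omega)]
        have : ((a + 1 : ℕ) : ZMod p) = b + 1 := by push_cast [hcast]; ring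
        rw [this]; exact hbsq1
      obtain ⟨n, hn, hqn⟩ := (hbij a).mp ⟨by omega, by omega, hqa⟩
      obtain ⟨m, hm, hqm⟩ := (hbij (a + 1)).mp ⟨by omega, by omega, hqa1⟩
      have hnm : n < m := hqmono n m hn hm (by omega)
      have hm_eq : m = n + 1 := by
        by_contra hc
        have h1' : n + 1 < m := by omega
        have := hmono n (n + 1) (by omega) (by omega)
        have := hmono (n + 1) m h1' hm
        omega
      refine ⟨n, ?_, ?_⟩
      · rw [Finset.mem_filter, Finset.mem_range]
        exact ⟨by omega, by rw [hm_eq] at hqm; omega⟩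
      · rw [hqn, hcast]
  rw [h1, h2, cardB p hp5]
end

section
/- Let p ≥ 5 be prime and let T(1) = Σₙ₌₀^{(p-5)/2} tₙ computed in 𝔽₂, where tₙ = 1 iff qₙ₊₁ = qₙ + 1 for the increasing sequence (qₙ) of quadratic residues mod p. Then T(1) = 1 if p ≡ ±1 (mod 8) and T(1) = 0 if p ≡ ±3 (mod 8). -/
lemma parity_involution {α : Type*} [DecidableEq α] (f : α → α) :
    ∀ (n : ℕ) (s : Finset α), s.card = n → (∀ a ∈ s, f a ∈ s) → (∀ a ∈ s, f (f a) = a) →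
      s.card % 2 = (s.filter fun a => f a = a).card % 2 := by
  intro n
  induction n using Nat.strong_induction_on with
  | _ n ih =>
    intro s hcard h1 h2
    by_cases hfix : ∀ a ∈ s, f a = a
    · rw [Finset.filter_true_of_mem hfix]
    · push_neg at hfix
      obtain ⟨a, ha, hfa⟩ := hfix
      have hfas : f a ∈ s := h1 a ha
      have hfamem : f a ∈ s.erase a := Finset.mem_erase.mpr ⟨hfa, hfas⟩
      set s' := (s.erase a).erase (f a) with hs'
      have hcard2 : 2 ≤ s.card := Finset.one_lt_card.mpr ⟨a, ha, f a, hfas, fun h => hfa h.symm⟩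
      have hcard' : s'.card = s.card - 2 := by
        rw [hs', Finset.card_erase_of_mem hfamem, Finset.card_erase_of_mem ha]; omega
      have hmem' : ∀ b, b ∈ s' ↔ b ∈ s ∧ b ≠ a ∧ b ≠ f a := by
        intro b
        simp only [hs', Finset.mem_erase]
        tauto
      have h1' : ∀ b ∈ s', f b ∈ s' := by
        intro b hb
        rw [hmem'] at hb ⊢
        obtain ⟨hbs, hba, hbfa⟩ := hb
        refine ⟨h1 b hbs, ?_, ?_⟩
        · intro h; exact hbfa (by rw [← h2 b hbs, h])
        · intro h
          have : f (f b) = f (f a) := by rw [h]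
          rw [h2 b hbs, h2 a ha] at this
          exact hba this
      have h2' : ∀ b ∈ s', f (f b) = b := fun b hb => h2 b ((hmem' b).mp hb).1
      have hfilter : s.filter (fun a => f a = a) = s'.filter (fun a => f a = a) := by
        ext b
        simp only [Finset.mem_filter, hmem']
        constructor
        · rintro ⟨hbs, hb⟩
          refine ⟨⟨hbs, ?_, ?_⟩, hb⟩
          · rintro rfl; exact hfa hb
          · rintro rfl; rw [h2 a ha] at hb; exact hfa hb.symm
        · tauto
      have hlt : s'.card < n := by omega
      have := ih s'.card hlt s' rfl h1' h2'
      rw [hfilter]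
      omega

theorem sum_tn_mod_two (p : ℕ) (hp : p.Prime) (hp5 : 5 ≤ p) (q : ℕ → ℕ)
    (hmono : ∀ i j : ℕ, i < j → j ≤ (p - 3) / 2 → q i < q j)
    (hbij : ∀ m : ℕ, (1 ≤ m ∧ m ≤ p - 1 ∧ ∃ x : ℕ, x ^ 2 % p = m) ↔
      ∃ n ≤ (p - 3) / 2, q n = m)
    (t : ℕ → ZMod 2)
    (ht : ∀ n ≤ (p - 5) / 2, t n = if q (n + 1) = q n + 1 then 1 else 0) :
    (∑ n ∈ Finset.range ((p - 3) / 2), t n) =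
      if p % 8 = 1 ∨ p % 8 = 7 then 1 else 0 := by
  classical
  haveI : Fact p.Prime := ⟨hp⟩
  have hp2 : p ≠ 2 := by omega
  have hodd : p % 2 = 1 := hp.eq_two_or_odd.resolve_left hp2
  set k := (p - 3) / 2 with hk
  -- basic cast facts
  have hne : ∀ m : ℕ, 1 ≤ m → m ≤ p - 1 → (m : ZMod p) ≠ 0 := by
    intro m h1 h2 h
    rw [ZMod.natCast_eq_zero_iff] at h
    have := Nat.le_of_dvd (by omega) h
    omega
  have hQR : ∀ m : ℕ, 1 ≤ m → m ≤ p - 1 →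
      ((∃ x : ℕ, x ^ 2 % p = m) ↔ IsSquare ((m : ZMod p))) := by
    intro m h1 h2
    constructor
    · rintro ⟨x, hx⟩
      refine ⟨(x : ZMod p), ?_⟩
      have : ((x ^ 2 % p : ℕ) : ZMod p) = ((m : ℕ) : ZMod p) := by rw [hx]
      rw [ZMod.natCast_mod] at this
      push_cast at this
      rw [← this]; ring
    · rintro ⟨r, hr⟩
      refine ⟨r.val, ?_⟩
      have hcast : ((r.val ^ 2 : ℕ) : ZMod p) = (m : ZMod p) := by
        push_cast [ZMod.natCast_val, ZMod.cast_id]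
        rw [hr]; ring
      have := congrArg ZMod.val hcast
      rwa [ZMod.val_natCast, ZMod.val_natCast, Nat.mod_eq_of_lt (by omega : m < p)] at this
  have hq : ∀ n ≤ (p - 3) / 2, 1 ≤ q n ∧ q n ≤ p - 1 ∧ ∃ x : ℕ, x ^ 2 % p = q n :=
    fun n hn => (hbij (q n)).mpr ⟨n, hn, rfl⟩
  -- Step A : the sum is the cardinality of the set of n with q (n+1) = q n + 1
  have hsum : (∑ n ∈ Finset.range k, t n) =
      (((Finset.range k).filter (fun n => q (n + 1) = q n + 1)).card : ZMod 2) := by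
    rw [Finset.sum_congr rfl (fun n hn => ht n (by
      rw [Finset.mem_range] at hn; omega))]
    rw [Finset.sum_boole]
  -- the target set of pairs of consecutive squares in ZMod p
  set S := Finset.univ.filter
    (fun a : ZMod p => IsSquare a ∧ IsSquare (a + 1) ∧ a ≠ 0 ∧ a + 1 ≠ 0) with hS
  have hmemS : ∀ a : ZMod p,
      a ∈ S ↔ IsSquare a ∧ IsSquare (a + 1) ∧ a ≠ 0 ∧ a + 1 ≠ 0 := by
    intro a; simp [hS]
  -- Step B : bijection
  have hcardeq : ((Finset.range k).filter (fun n => q (n + 1) = q n + 1)).card = S.card := by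
    apply Finset.card_bij (fun n _ => ((q n : ℕ) : ZMod p))
    · intro n hn
      rw [Finset.mem_filter, Finset.mem_range] at hn
      obtain ⟨hnk, hqq⟩ := hn
      have hn1 : n ≤ (p - 3) / 2 := by omega
      have hn2 : n + 1 ≤ (p - 3) / 2 := by omega
      obtain ⟨ha1, ha2, hx⟩ := hq n hn1
      obtain ⟨hb1, hb2, hy⟩ := hq (n + 1) hn2
      rw [hqq] at hb1 hb2 hy
      have hcast : ((q n : ℕ) : ZMod p) + 1 = ((q n + 1 : ℕ) : ZMod p) := by push_cast; ring
      rw [hmemS]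
      refine ⟨(hQR _ ha1 ha2).mp hx, ?_, hne _ ha1 ha2, ?_⟩
      · rw [hcast]; exact (hQR _ hb1 hb2).mp hy
      · rw [hcast]; exact hne _ hb1 hb2
    · intro n₁ hn₁ n₂ hn₂ h
      rw [Finset.mem_filter, Finset.mem_range] at hn₁ hn₂
      have h1 := hq n₁ (by omega)
      have h2 := hq n₂ (by omega)
      have := congrArg ZMod.val h
      rw [ZMod.val_cast_of_lt (by omega), ZMod.val_cast_of_lt (by omega)] at this
      rcases Nat.lt_trichotomy n₁ n₂ with hlt | heq | hgt
      · have := hmono n₁ n₂ hlt (by omega); omega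
      · exact heq
      · have := hmono n₂ n₁ hgt (by omega); omega
    · intro b hb
      rw [hmemS] at hb
      obtain ⟨hsq, hsq1, hb0, hb10⟩ := hb
      set a := b.val with hav
      have hba : ((a : ℕ) : ZMod p) = b := by
        rw [hav, ZMod.natCast_val, ZMod.cast_id]
      have halt : a < p := ZMod.val_lt b
      have ha1 : 1 ≤ a := by
        rcases Nat.eq_zero_or_pos a with h | h
        · exfalso; apply hb0; rw [← hba, h, Nat.cast_zero]
        · exact h
      have hap : a + 1 ≤ p - 1 := by
        by_contra h
        have : a + 1 = p := by omega
        apply hb10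
        rw [← hba]
        have : ((a + 1 : ℕ) : ZMod p) = 0 := by rw [this, ZMod.natCast_self]
        push_cast at this
        exact this
      have hbeq : ((a + 1 : ℕ) : ZMod p) = b + 1 := by push_cast [hba]; ring
      obtain ⟨m, hm, hqm⟩ := (hbij a).mp ⟨ha1, by omega, (hQR a ha1 (by omega)).mpr
        (by rw [hba]; exact hsq)⟩
      obtain ⟨m', hm', hqm'⟩ := (hbij (a + 1)).mp ⟨by omega, hap, (hQR (a + 1) (by omega) hap).mpr
        (by rw [hbeq]; exact hsq1)⟩
      have hmm' : m < m' := by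
        rcases Nat.lt_trichotomy m m' with hlt | heq | hgt
        · exact hlt
        · exfalso; rw [heq, hqm'] at hqm; omega
        · exfalso; have := hmono m' m hgt hm; omega
      have hsucc : q (m + 1) = q m + 1 := by
        rcases Nat.lt_or_ge (m + 1) m' with hlt | hge
        · exfalso
          have e1 := hmono m (m + 1) (Nat.lt_succ_self m) (by omega)
          have e2 := hmono (m + 1) m' hlt hm'
          omega
        · have : m' = m + 1 := by omega
          rw [← this, hqm, hqm']
      refine ⟨m, ?_, ?_⟩
      · rw [Finset.mem_filter, Finset.mem_range]
        exact ⟨by omega, hsucc⟩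
      · rw [hqm, hba]
  -- Step C : involution a ↦ a⁻¹
  have hinvS : ∀ a ∈ S, a⁻¹ ∈ S := by
    intro a ha
    rw [hmemS] at ha ⊢
    obtain ⟨h1, h2, h3, h4⟩ := ha
    have hainv : a⁻¹ ≠ 0 := inv_ne_zero h3
    refine ⟨h1.inv, ?_, hainv, ?_⟩
    · have : a⁻¹ + 1 = a⁻¹ * (a + 1) := by field_simp; ring
      rw [this]
      exact h1.inv.mul h2
    · intro h
      have h5 : a⁻¹ = -1 := by linear_combination h
      have : a = -1 := by rw [← inv_inv a, h5, inv_neg, inv_one]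
      apply h4; rw [this]; ring
  have hinv2 : ∀ a ∈ S, (a⁻¹)⁻¹ = a := fun a _ => inv_inv a
  have hparity := parity_involution (fun a : ZMod p => a⁻¹) S.card S rfl hinvS hinv2
  -- Step D : fixed points
  have h2iff := ZMod.exists_sq_eq_two_iff (p := p) hp2
  have h2ne : (2 : ZMod p) ≠ 0 := by
    have := hne 2 (by omega) (by omega)
    rwa [Nat.cast_ofNat] at this
  have hmod : S.card % 2 = if p % 8 = 1 ∨ p % 8 = 7 then 1 else 0 := by
    rw [hparity]
    by_cases hsq : IsSquare (2 : ZMod p)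
    · rw [if_pos (h2iff.mp hsq)]
      have : S.filter (fun a => a⁻¹ = a) = {1} := by
        ext a
        rw [Finset.mem_filter, hmemS, Finset.mem_singleton]
        constructor
        · rintro ⟨⟨hs1, hs2, hs3, hs4⟩, hfix⟩
          have hsq1 : a * a = 1 := by nth_rewrite 2 [← hfix]; exact mul_inv_cancel₀ hs3
          have : a = 1 ∨ a = -1 := sq_eq_one_iff.mp (by rw [sq]; exact hsq1)
          rcases this with h | h
          · exact h
          · exfalso; apply hs4; rw [h]; ring
        · rintro rfl
          refine ⟨⟨IsSquare.one, ?_, one_ne_zero, ?_⟩, inv_one⟩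
          · rw [one_add_one_eq_two]; exact hsq
          · rw [one_add_one_eq_two]; exact h2ne
      rw [this, Finset.card_singleton]
    · rw [if_neg (fun h => hsq (h2iff.mpr h))]
      have : S.filter (fun a => a⁻¹ = a) = ∅ := by
        ext a
        simp only [Finset.mem_filter, hmemS, Finset.notMem_empty, iff_false]
        rintro ⟨⟨hs1, hs2, hs3, hs4⟩, hfix⟩
        have hsq1 : a * a = 1 := by nth_rewrite 2 [← hfix]; exact mul_inv_cancel₀ hs3
        have ha2 : a ^ 2 = 1 := by rw [sq]; exact hsq1
        have : a = 1 ∨ a = -1 := sq_eq_one_iff.mp ha2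
        rcases this with h | h
        · apply hsq; rw [h, one_add_one_eq_two] at hs2; exact hs2
        · apply hs4; rw [h]; ring
      rw [this, Finset.card_empty]
  -- conclude
  rw [hsum, hcardeq, ← ZMod.natCast_mod, hmod]
  split_ifs <;> simp
end

section
/- For every prime p > 25, there exists n with 1 ≤ n ≤ p-3 such that the Legendre symbols satisfy (n/p) = 1, ((n+1)/p) = -1, and ((n+2)/p) = 1. -/
open Finset

variable {p : ℕ} [Fact p.Prime]

local notation "χ" => quadraticChar (ZMod p)

lemma hF' (hp2 : p ≠ 2) : ringChar (ZMod p) ≠ 2 := by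
  rw [ZMod.ringChar_zmod_n]; exact hp2

-- L1
lemma sum_chi_mul_shift (hp2 : p ≠ 2) (c : ZMod p) (hc : c ≠ 0) :
    ∑ x : ZMod p, χ x * χ (x + c) = -1 := by
  have h1 : ∑ x : ZMod p, χ x * χ (x + c)
      = ∑ x ∈ (univ : Finset (ZMod p)) \ {0}, χ x * χ (x + c) := by
    rw [Finset.sum_sdiff_eq_sub (Finset.subset_univ _)]
    simp
  rw [h1]
  have h2 : ∑ x ∈ (univ : Finset (ZMod p)) \ {0}, χ x * χ (x + c)
      = ∑ y ∈ (univ : Finset (ZMod p)) \ {1}, χ y := by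
    refine Finset.sum_nbij' (fun x => 1 + c * x⁻¹) (fun y => c * (y - 1)⁻¹) ?_ ?_ ?_ ?_ ?_
    · intro a ha
      simp only [mem_sdiff, mem_univ, mem_singleton, true_and] at ha ⊢
      intro h
      have : c * a⁻¹ = 0 := by linear_combination h
      rcases mul_eq_zero.mp this with h' | h'
      · exact hc h'
      · exact ha (by simpa using inv_eq_zero.mp h')
    · intro b hb
      simp only [mem_sdiff, mem_univ, mem_singleton, true_and] at hb ⊢
      intro h
      rcases mul_eq_zero.mp h with h' | h'
      · exact hc h'
      · exact hb (by
          have := inv_eq_zero.mp h'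
          have : b = 1 := by linear_combination this
          exact this)
    · intro a ha
      simp only [mem_sdiff, mem_univ, mem_singleton, true_and] at ha
      field_simp
      simp [hc]
    · intro b hb
      simp only [mem_sdiff, mem_univ, mem_singleton, true_and] at hb
      have h1 : b - 1 ≠ 0 := sub_ne_zero.mpr hb
      field_simp
      ring
    · intro a ha
      simp only [mem_sdiff, mem_univ, mem_singleton, true_and] at ha
      have hxc : a + c = a * (1 + c * a⁻¹) := by field_simp
      rw [hxc, map_mul, ← mul_assoc, ← pow_two, quadraticChar_sq_one ha, one_mul]
  rw [h2, Finset.sum_sdiff_eq_sub (Finset.subset_univ _),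
    quadraticChar_sum_zero (hF' hp2)]
  simp

lemma sum_chi_shift2 (hp2 : p ≠ 2) (a b : ZMod p) :
    ∑ x : ZMod p, χ (x + a) * χ (x + b) = if a = b then (p - 1 : ℤ) else -1 := by
  split_ifs with hab
  · subst hab
    have : ∀ x : ZMod p, χ (x + a) * χ (x + a) = if x = -a then 0 else 1 := by
      intro x
      split_ifs with h
      · subst h; simp
      · have : x + a ≠ 0 := fun hh => h (by linear_combination hh)
        rw [← pow_two]; exact quadraticChar_sq_one this
    rw [Finset.sum_congr rfl fun x _ => this x]
    have h2 : (∑ x : ZMod p, if x = -a then (0:ℤ) else 1)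
        = ∑ x : ZMod p, ((1:ℤ) - if x = -a then 1 else 0) := by
      refine Finset.sum_congr rfl fun x _ => ?_
      split_ifs <;> ring
    rw [h2, Finset.sum_sub_distrib, Finset.sum_ite_eq' univ (-a) (fun _ => (1:ℤ))]
    simp [Finset.card_univ, ZMod.card]
  · have h1 : ∑ x : ZMod p, χ (x + a) * χ (x + b)
        = ∑ x : ZMod p, χ x * χ (x + (b - a)) := by
      refine Fintype.sum_equiv (Equiv.addRight a) _ _ ?_
      intro x
      simp only [Equiv.coe_addRight]
      have : x + a + (b - a) = x + b := by ring
      rw [this]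
    rw [h1, sum_chi_mul_shift hp2 _ (sub_ne_zero.mpr (Ne.symm hab))]

lemma sum_sq_eq (hp2 : p ≠ 2) (g : ZMod p → ℤ) :
    ∑ x : ZMod p, g (x ^ 2) = ∑ y : ZMod p, (χ y + 1) * g y := by
  rw [← Finset.sum_fiberwise' univ (fun x : ZMod p => x ^ 2) g]
  refine Finset.sum_congr rfl fun y _ => ?_
  rw [Finset.sum_const, ← quadraticChar_card_sqrts (hF' hp2) y]
  have : {x : ZMod p | x ^ 2 = y}.toFinset = univ.filter (fun x => x ^ 2 = y) := by
    ext x; simp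
  rw [this]
  push_cast
  rw [nsmul_eq_mul]
/-- Jacobsthal sums -/
noncomputable def phi (p : ℕ) [Fact p.Prime] (n : ZMod p) : ℤ :=
  ∑ x : ZMod p, quadraticChar (ZMod p) x * quadraticChar (ZMod p) (x ^ 2 + n)

lemma phi_zero (hp2 : p ≠ 2) : phi p 0 = 0 := by
  have : ∀ x : ZMod p, χ x * χ (x ^ 2 + 0) = χ x := by
    intro x
    by_cases hx : x = 0
    · simp [hx]
    · rw [add_zero, quadraticChar_sq_one' hx, mul_one]
  rw [phi, Finset.sum_congr rfl fun x _ => this x, quadraticChar_sum_zero (hF' hp2)]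

lemma phi_sq_mul (k n : ZMod p) (hk : k ≠ 0) : phi p (k ^ 2 * n) = χ k * phi p n := by
  rw [phi, phi, Finset.mul_sum]
  refine Fintype.sum_equiv (Equiv.mulLeft₀ k⁻¹ (inv_ne_zero hk)) _ _ ?_
  intro x
  show χ x * χ (x^2 + k^2*n) = χ k * (χ (k⁻¹*x) * χ ((k⁻¹*x)^2 + n))
  have h1 : (k⁻¹*x)^2 + n = (k⁻¹)^2 * (x^2 + k^2*n) := by field_simp
  rw [h1, map_mul, map_mul, quadraticChar_sq_one' (inv_ne_zero hk)]
  have h2 : χ k * χ k⁻¹ = 1 := by rw [← map_mul, mul_inv_cancel₀ hk, map_one]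
  linear_combination (-(χ x * χ (x^2 + k^2*n))) * h2

lemma sum_phi_sq_le (hp2 : p ≠ 2) : ∑ n : ZMod p, (phi p n) ^ 2 ≤ 2 * p ^ 2 := by
  have key : ∀ n : ZMod p, (phi p n) ^ 2 =
      ∑ x : ZMod p, ∑ y : ZMod p, χ x * χ y * (χ (x ^ 2 + n) * χ (y ^ 2 + n)) := by
    intro n
    rw [phi, pow_two, Finset.sum_mul_sum]
    refine Finset.sum_congr rfl fun x _ => Finset.sum_congr rfl fun y _ => by ring
  calc ∑ n : ZMod p, (phi p n) ^ 2
      = ∑ x : ZMod p, ∑ y : ZMod p, χ x * χ y *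
          (∑ n : ZMod p, χ (n + x ^ 2) * χ (n + y ^ 2)) := by
        rw [Finset.sum_congr rfl fun n _ => key n]
        rw [Finset.sum_comm]
        refine Finset.sum_congr rfl fun x _ => ?_
        rw [Finset.sum_comm]
        refine Finset.sum_congr rfl fun y _ => ?_
        rw [Finset.mul_sum]
        refine Finset.sum_congr rfl fun n _ => ?_
        rw [add_comm (x^2) n, add_comm (y^2) n]
    _ = ∑ x : ZMod p, ∑ y : ZMod p, χ x * χ y *
          (if x ^ 2 = y ^ 2 then (p - 1 : ℤ) else -1) := by
        refine Finset.sum_congr rfl fun x _ => Finset.sum_congr rfl fun y _ => ?_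
        rw [sum_chi_shift2 hp2]
    _ = ∑ x : ZMod p, ∑ y : ZMod p,
          (-(χ x * χ y) + if x ^ 2 = y ^ 2 then (p : ℤ) * (χ x * χ y) else 0) := by
        refine Finset.sum_congr rfl fun x _ => Finset.sum_congr rfl fun y _ => ?_
        split_ifs <;> ring
    _ = (p:ℤ) * ∑ x : ZMod p, χ x * (χ x + χ (-x)) := by
        have inner : ∀ x : ZMod p, (∑ y : ZMod p, if x ^ 2 = y ^ 2 then χ y else 0)
            = χ x + χ (-x) := by
          intro x
          by_cases hx : x = 0
          · subst hx
            have : ∀ y : ZMod p, ((if (0:ZMod p) ^ 2 = y ^ 2 then χ y else 0) : ℤ)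
                = if y = 0 then χ y else 0 := by
              intro y
              have : (0:ZMod p) ^ 2 = y ^ 2 ↔ y = 0 := by
                constructor
                · intro h
                  have hy : y ^ 2 = 0 := by rw [← h]; norm_num
                  exact pow_eq_zero_iff (by norm_num : (2:ℕ) ≠ 0) |>.mp hy
                · intro h; rw [h]
              simp only [this]
            rw [Finset.sum_congr rfl fun y _ => this y,
              Finset.sum_ite_eq' univ (0 : ZMod p) (fun y => χ y)]
            simp
          · have hxx : x ≠ -x := by
              intro h
              apply hx
              have h2 : (2 : ZMod p) * x = 0 := by linear_combination h
              rcases mul_eq_zero.mp h2 with h' | h'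
              · exfalso
                have hd : (p : ℕ) ∣ 2 := by
                  have : ((2 : ℕ) : ZMod p) = 0 := by exact_mod_cast h'
                  exact (ZMod.natCast_eq_zero_iff 2 p).mp this
                have := (Nat.prime_dvd_prime_iff_eq (Fact.out : p.Prime) Nat.prime_two).mp hd
                exact hp2 this
              · exact h'
            have hpt : ∀ y : ZMod p, ((if x ^ 2 = y ^ 2 then χ y else 0) : ℤ)
                = (if y = x then χ y else 0) + (if y = -x then χ y else 0) := by
              intro y
              by_cases h1 : y = x
              · subst h1
                rw [if_pos rfl, if_pos rfl, if_neg hxx]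
                ring
              · by_cases h2 : y = -x
                · subst h2
                  rw [if_pos (by ring), if_neg h1, if_pos rfl]
                  ring
                · rw [if_neg h1, if_neg h2, if_neg]
                  · ring
                  · intro h
                    rcases sq_eq_sq_iff_eq_or_eq_neg.mp h with h' | h'
                    · exact h1 h'.symm
                    · exact h2 (by rw [h']; ring)
            rw [Finset.sum_congr rfl fun y _ => hpt y, Finset.sum_add_distrib,
              Finset.sum_ite_eq' univ x (fun y => χ y),
              Finset.sum_ite_eq' univ (-x) (fun y => χ y)]
            simp
        rw [Finset.mul_sum]
        refine Finset.sum_congr rfl fun x _ => ?_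
        have : ∀ y : ZMod p, (-(χ x * χ y) + if x ^ 2 = y ^ 2 then (p : ℤ) * (χ x * χ y) else 0)
            = -(χ x * χ y) + ((p:ℤ) * χ x) * (if x ^ 2 = y ^ 2 then χ y else 0) := by
          intro y; split_ifs <;> ring
        rw [Finset.sum_congr rfl fun y _ => this y, Finset.sum_add_distrib]
        have e1 : ∑ y : ZMod p, -(χ x * χ y) = 0 := by
          rw [Finset.sum_neg_distrib, ← Finset.mul_sum, quadraticChar_sum_zero (hF' hp2),
            mul_zero, neg_zero]
        have e2 : ∑ y : ZMod p, ((p:ℤ) * χ x) * (if x ^ 2 = y ^ 2 then χ y else 0)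
            = ((p:ℤ) * χ x) * (χ x + χ (-x)) := by
          rw [← Finset.mul_sum, inner x]
        rw [e1, e2]
        ring
    _ ≤ (p:ℤ) * ∑ x : ZMod p, 2 := by
        have hp0 : (0:ℤ) ≤ (p:ℤ) := Int.natCast_nonneg p
        refine mul_le_mul_of_nonneg_left ?_ hp0
        refine Finset.sum_le_sum fun x _ => ?_
        have hneg : χ (-x) = χ (-1) * χ x := by
          rw [← map_mul]; ring_nf
        rw [hneg]
        have h1 : χ x = 0 ∨ χ x = 1 ∨ χ x = -1 := by
          rcases quadraticChar_isQuadratic (ZMod p) x with h | h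
          · exact Or.inl h
          · exact Or.inr h
        have h2 : χ (-1) = 1 ∨ χ (-1) = -1 :=
          quadraticChar_dichotomy (neg_ne_zero.mpr one_ne_zero)
        rcases h1 with h | h | h <;> rcases h2 with h' | h' <;> rw [h, h'] <;> norm_num
    _ ≤ 2 * p ^ 2 := by
        rw [Finset.sum_const, Finset.card_univ, ZMod.card, nsmul_eq_mul]
        push_cast
        ring_nf
        exact le_of_eq (by ring)
lemma chi_le_one (a : ZMod p) : χ a ≤ 1 ∧ -1 ≤ χ a := by
  rcases quadraticChar_isQuadratic (ZMod p) a with h | h | h <;> rw [h] <;> norm_num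

lemma T_sq_le (hp2 : p ≠ 2) : (p - 1 : ℤ) * (phi p 1) ^ 2 ≤ 4 * p ^ 2 := by
  have hU : ∑ k : ZMod p, (phi p (k ^ 2)) ^ 2 = (p - 1 : ℤ) * (phi p 1) ^ 2 := by
    have hpt : ∀ k : ZMod p, (phi p (k ^ 2)) ^ 2 = (χ k) ^ 2 * (phi p 1) ^ 2 := by
      intro k
      by_cases hk : k = 0
      · subst hk
        rw [(by norm_num : (0:ZMod p) ^ 2 = 0), phi_zero hp2]
        simp
      · have : (k : ZMod p) ^ 2 = k ^ 2 * 1 := by ring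
        rw [this, phi_sq_mul k 1 hk, mul_pow]
    rw [Finset.sum_congr rfl fun k _ => hpt k, ← Finset.sum_mul]
    congr 1
    have hpt2 : ∀ k : ZMod p, (χ k) ^ 2 = if k = 0 then (0:ℤ) else 1 := by
      intro k
      split_ifs with h
      · subst h; simp
      · exact quadraticChar_sq_one h
    rw [Finset.sum_congr rfl fun k _ => hpt2 k]
    have h2 : (∑ k : ZMod p, if k = 0 then (0:ℤ) else 1)
        = ∑ k : ZMod p, ((1:ℤ) - if k = 0 then 1 else 0) := by
      refine Finset.sum_congr rfl fun k _ => ?_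
      split_ifs <;> ring
    rw [h2, Finset.sum_sub_distrib, Finset.sum_ite_eq' univ (0 : ZMod p) (fun _ => (1:ℤ))]
    simp [Finset.card_univ, ZMod.card]
  have hsq := sum_sq_eq hp2 (fun y => (phi p y) ^ 2)
  have hle : ∑ y : ZMod p, (χ y + 1) * (phi p y) ^ 2 ≤ 2 * ∑ y : ZMod p, (phi p y) ^ 2 := by
    rw [Finset.mul_sum]
    refine Finset.sum_le_sum fun y _ => ?_
    refine mul_le_mul_of_nonneg_right ?_ (sq_nonneg _)
    linarith [(chi_le_one y).1]
  have := sum_phi_sq_le hp2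
  calc (p - 1 : ℤ) * (phi p 1) ^ 2 = ∑ y : ZMod p, (χ y + 1) * (phi p y) ^ 2 := by
        rw [← hsq, hU]
    _ ≤ 2 * ∑ y : ZMod p, (phi p y) ^ 2 := hle
    _ ≤ 4 * p ^ 2 := by linarith

lemma sum_chi_sq_add_one (hp2 : p ≠ 2) : ∑ x : ZMod p, χ (x ^ 2 + 1) = -1 := by
  rw [sum_sq_eq hp2 (fun y => χ (y + 1))]
  have h1 : ∑ y : ZMod p, (χ y + 1) * χ (y + 1)
      = (∑ y : ZMod p, χ y * χ (y + 1)) + ∑ y : ZMod p, χ (y + 1) := by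
    rw [← Finset.sum_add_distrib]
    refine Finset.sum_congr rfl fun y _ => by ring
  have h2 : ∑ y : ZMod p, χ (y + 1) = 0 := by
    have := Fintype.sum_equiv (Equiv.addRight (1 : ZMod p))
      (fun y : ZMod p => χ (y + 1)) (fun y => χ y) (fun y => rfl)
    rw [this]
    exact quadraticChar_sum_zero (hF' hp2)
  rw [h1, h2, sum_chi_mul_shift hp2 1 one_ne_zero, add_zero]
lemma zmod_two_ne_zero (hp25 : 25 < p) : (2 : ZMod p) ≠ 0 := by
  intro h
  have hd : (p : ℕ) ∣ 2 := by
    have : ((2 : ℕ) : ZMod p) = 0 := by exact_mod_cast h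
    exact (ZMod.natCast_eq_zero_iff 2 p).mp this
  have := Nat.le_of_dvd (by norm_num) hd
  omega

lemma exists_good_t (hp25 : 25 < p) :
    ∃ t : ZMod p, t ≠ -1 ∧ χ t = χ 2 ∧ χ (t ^ 2 + 1) = -1 := by
  have hp2 : p ≠ 2 := by omega
  have h2ne : (2 : ZMod p) ≠ 0 := zmod_two_ne_zero hp25
  have hchi2 : χ 2 = 1 ∨ χ 2 = -1 := quadraticChar_dichotomy h2ne
  have hchi2sq : χ 2 * χ 2 = 1 := by rcases hchi2 with h | h <;> rw [h] <;> norm_num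
  set f : ZMod p → ℤ := fun t => (1 + χ 2 * χ t) * (1 - χ (t ^ 2 + 1)) with hf
  set G : Finset (ZMod p) := univ.filter (fun t => χ t = χ 2 ∧ χ (t ^ 2 + 1) = -1) with hG
  -- total sum
  have hsum : ∑ t : ZMod p, f t = (p : ℤ) + 1 - χ 2 * phi p 1 := by
    have hpt : ∀ t : ZMod p, f t
        = 1 + χ 2 * χ t - χ (t ^ 2 + 1) - χ 2 * (χ t * χ (t ^ 2 + 1)) := fun t => by
      simp only [hf]; ring
    rw [Finset.sum_congr rfl fun t _ => hpt t, Finset.sum_sub_distrib, Finset.sum_sub_distrib,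
      Finset.sum_add_distrib, ← Finset.mul_sum, ← Finset.mul_sum,
      quadraticChar_sum_zero (hF' hp2), sum_chi_sq_add_one hp2]
    have : ∑ t : ZMod p, χ t * χ (t ^ 2 + 1) = phi p 1 := by
      rw [phi]
    rw [this]
    simp only [Finset.sum_const, Finset.card_univ, ZMod.card, nsmul_eq_mul, mul_one]
    ring
  -- sum over G
  have hGsum : ∑ t ∈ G, f t = 4 * (G.card : ℤ) := by
    have : ∀ t ∈ G, f t = 4 := by
      intro t ht
      rw [hG, Finset.mem_filter] at ht
      simp only [hf]
      rw [ht.2.1, ht.2.2, hchi2sq]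
      norm_num
    rw [Finset.sum_congr rfl this, Finset.sum_const, nsmul_eq_mul]
    ring
  -- sum over complement
  have hfnonneg : ∀ t : ZMod p, 0 ≤ f t := by
    intro t
    simp only [hf]
    have h1 := chi_le_one (p := p) t
    have h2 := chi_le_one (p := p) (t ^ 2 + 1)
    have h3 := chi_le_one (p := p) 2
    rcases hchi2 with h | h <;> rw [h] <;> nlinarith
  have hcompl : ∑ t ∈ univ \ G, f t ≤ 6 := by
    have hptle : ∀ t ∈ univ \ G, f t ≤ if (t = 0 ∨ t ^ 2 + 1 = 0) then 2 else 0 := by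
      intro t ht
      rw [Finset.mem_sdiff, hG, Finset.mem_filter] at ht
      have hnotG : ¬(χ t = χ 2 ∧ χ (t ^ 2 + 1) = -1) := fun h => ht.2 ⟨mem_univ t, h⟩
      split_ifs with hcase
      · -- f t ≤ 2
        rcases hcase with h0 | h0
        · simp only [hf]
          rw [h0]
          have h2 := chi_le_one (p := p) ((0:ZMod p) ^ 2 + 1)
          simp only [MulChar.map_zero, mul_zero, add_zero, one_mul]
          linarith [h2.2]
        · simp only [hf]
          rw [h0]
          have h3 := chi_le_one (p := p) t
          rcases hchi2 with h | h <;> rw [h] <;> simp only [MulChar.map_zero] <;> nlinarith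
      · push_neg at hcase
        have ht0 : t ≠ 0 := hcase.1
        have ht1 : t ^ 2 + 1 ≠ 0 := hcase.2
        have d1 : χ t = 1 ∨ χ t = -1 := quadraticChar_dichotomy ht0
        have d2 : χ (t ^ 2 + 1) = 1 ∨ χ (t ^ 2 + 1) = -1 := quadraticChar_dichotomy ht1
        rcases d2 with h | h
        · simp only [hf]; rw [h]; ring_nf; exact le_refl 0
        · have hne : χ t ≠ χ 2 := fun hh => hnotG ⟨hh, h⟩
          have : χ 2 * χ t = -1 := by
            rcases d1 with h1 | h1 <;> rcases hchi2 with h2 | h2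
            · exact absurd (h1.trans h2.symm) hne
            · rw [h1, h2]; norm_num
            · rw [h1, h2]; norm_num
            · exact absurd (h1.trans h2.symm) hne
          simp only [hf]; rw [this]
          ring_nf
          exact le_refl 0
    calc ∑ t ∈ univ \ G, f t ≤ ∑ t ∈ univ \ G, (if (t = 0 ∨ t ^ 2 + 1 = 0) then (2:ℤ) else 0) :=
          Finset.sum_le_sum hptle
      _ ≤ ∑ t : ZMod p, (if (t = 0 ∨ t ^ 2 + 1 = 0) then (2:ℤ) else 0) := by
          refine Finset.sum_le_sum_of_subset_of_nonneg (Finset.sdiff_subset) ?_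
          intro t _ _
          split_ifs <;> norm_num
      _ = 2 * ((univ.filter (fun t : ZMod p => t = 0 ∨ t ^ 2 + 1 = 0)).card : ℤ) := by
          rw [← Finset.sum_filter, Finset.sum_const, nsmul_eq_mul]
          ring
      _ ≤ 6 := by
          have hsub : (univ.filter (fun t : ZMod p => t = 0 ∨ t ^ 2 + 1 = 0))
              ⊆ insert (0 : ZMod p) {x : ZMod p | x ^ 2 = -1}.toFinset := by
            intro t ht
            rw [Finset.mem_filter] at ht
            rcases ht.2 with h | h
            · rw [h]; exact Finset.mem_insert_self _ _
            · refine Finset.mem_insert_of_mem ?_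
              rw [Set.mem_toFinset, Set.mem_setOf_eq]
              linear_combination h
          have h1 := Finset.card_le_card hsub
          have h2 := Finset.card_insert_le (0 : ZMod p) ({x : ZMod p | x ^ 2 = -1}.toFinset)
          have h3 : (({x : ZMod p | x ^ 2 = -1}.toFinset.card : ℤ)) = χ (-1) + 1 :=
            quadraticChar_card_sqrts (hF' hp2) (-1)
          have h4 := (chi_le_one (p := p) (-1)).1
          have h5 : ({x : ZMod p | x ^ 2 = -1}.toFinset.card : ℤ) ≤ 2 := by rw [h3]; linarith
          have h6 : {x : ZMod p | x ^ 2 = -1}.toFinset.card ≤ 2 := by exact_mod_cast h5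
          have h7 : (univ.filter (fun t : ZMod p => t = 0 ∨ t ^ 2 + 1 = 0)).card ≤ 3 := by omega
          have h8 : ((univ.filter (fun t : ZMod p => t = 0 ∨ t ^ 2 + 1 = 0)).card : ℤ) ≤ 3 := by
            exact_mod_cast h7
          linarith
  -- combine
  have hsplit : ∑ t ∈ univ \ G, f t + ∑ t ∈ G, f t = ∑ t : ZMod p, f t :=
    Finset.sum_sdiff (Finset.subset_univ G)
  have hpz : (26 : ℤ) ≤ (p : ℤ) := by exact_mod_cast hp25
  have hT : χ 2 * phi p 1 ≤ (p : ℤ) - 10 := by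
    by_contra hcon
    push_neg at hcon
    have hq2 : (χ 2 * phi p 1) ^ 2 = (phi p 1) ^ 2 := by
      linear_combination (phi p 1) ^ 2 * hchi2sq
    have hq9 : (p : ℤ) - 9 ≤ χ 2 * phi p 1 := by omega
    have hsq : ((p : ℤ) - 9) ^ 2 ≤ (χ 2 * phi p 1) ^ 2 := by nlinarith
    have hTle := T_sq_le hp2
    nlinarith
  have hcard : (2 : ℤ) ≤ (G.card : ℤ) := by
    have : 4 * (G.card : ℤ) ≥ 5 := by
      rw [← hGsum]
      have : ∑ t ∈ G, f t = ∑ t : ZMod p, f t - ∑ t ∈ univ \ G, f t := by linarith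
      rw [this, hsum]
      linarith
    omega
  have hcardnat : 1 < G.card := by exact_mod_cast by omega
  obtain ⟨a, ha, b, hb, hab⟩ := Finset.one_lt_card.mp hcardnat
  rw [hG, Finset.mem_filter] at ha hb
  by_cases han : a = -1
  · refine ⟨b, ?_, hb.2.1, hb.2.2⟩
    intro hbn
    exact hab (by rw [han, hbn])
  · exact ⟨a, han, ha.2.1, ha.2.2⟩
lemma chi_inv (a : ZMod p) : χ a⁻¹ = χ a := by
  by_cases ha : a = 0
  · rw [ha, inv_zero]
  · have h1 : χ a * χ a⁻¹ = 1 := by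
      rw [← map_mul, mul_inv_cancel₀ ha, map_one]
    rcases quadraticChar_dichotomy ha with h | h <;> rw [h] at h1 ⊢ <;> linarith

theorem exists_pattern_1m1 (p : ℕ) (hp : Fact p.Prime) (hp25 : 25 < p) :
    ∃ n : ℕ, 1 ≤ n ∧ n ≤ p - 3 ∧ legendreSym p (n : ℤ) = 1 ∧
      legendreSym p ((n : ℤ) + 1) = -1 ∧ legendreSym p ((n : ℤ) + 2) = 1 := by
  obtain ⟨t, htn1, ht2, htsq⟩ := exists_good_t hp25
  have h2ne : (2 : ZMod p) ≠ 0 := zmod_two_ne_zero hp25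
  have hchi2 : quadraticChar (ZMod p) 2 = 1 ∨ quadraticChar (ZMod p) 2 = -1 := quadraticChar_dichotomy h2ne
  have ht0 : t ≠ 0 := by
    intro h
    rw [h, MulChar.map_zero] at ht2
    rcases hchi2 with h' | h' <;> rw [h'] at ht2 <;> norm_num at ht2
  have ht1 : t ≠ 1 := by
    intro h
    rw [h] at ht2 htsq
    rw [map_one] at ht2
    have : ((1:ZMod p) ^ 2 + 1) = 2 := by ring
    rw [this] at htsq
    rw [← ht2] at htsq
    norm_num at htsq
  have htsqne : t ^ 2 + 1 ≠ 0 := by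
    intro h
    rw [h, MulChar.map_zero] at htsq
    norm_num at htsq
  have h2t : (2 : ZMod p) * t ≠ 0 := mul_ne_zero h2ne ht0
  set m : ZMod p := (t ^ 2 + 1) * ((2 : ZMod p) * t)⁻¹ with hm
  have hchi2t : quadraticChar (ZMod p) ((2:ZMod p) * t) = 1 := by
    rw [map_mul, ← ht2]
    rcases quadraticChar_dichotomy ht0 with h | h <;> rw [h] <;> norm_num
  have hchi2tinv : quadraticChar (ZMod p) (((2:ZMod p) * t)⁻¹) = 1 := by rw [chi_inv]; exact hchi2t
  have hm0 : quadraticChar (ZMod p) m = -1 := by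
    rw [hm, map_mul, hchi2tinv, htsq]; ring
  have hmm1 : m - 1 = (t - 1) ^ 2 * ((2 : ZMod p) * t)⁻¹ := by
    rw [hm]
    field_simp
    ring
  have hmp1 : m + 1 = (t + 1) ^ 2 * ((2 : ZMod p) * t)⁻¹ := by
    rw [hm]
    field_simp
    ring
  have hchim1 : quadraticChar (ZMod p) (m - 1) = 1 := by
    rw [hmm1, map_mul, hchi2tinv, quadraticChar_sq_one' (sub_ne_zero.mpr ht1)]
    ring
  have hchimp1 : quadraticChar (ZMod p) (m + 1) = 1 := by
    have : t + 1 ≠ 0 := by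
      intro h
      exact htn1 (by linear_combination h)
    rw [hmp1, map_mul, hchi2tinv, quadraticChar_sq_one' this]
    ring
  -- m ∉ {0, 1, -1}
  have hm_ne0 : m ≠ 0 := by
    intro h; rw [h, MulChar.map_zero] at hm0; norm_num at hm0
  have hm_ne1 : m ≠ 1 := by
    intro h
    have : m - 1 = 0 := by rw [h]; ring
    rw [this, MulChar.map_zero] at hchim1; norm_num at hchim1
  have hm_nem1 : m ≠ -1 := by
    intro h
    have : m + 1 = 0 := by rw [h]; ring
    rw [this, MulChar.map_zero] at hchimp1; norm_num at hchimp1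
  refine ⟨(m - 1).val, ?_, ?_, ?_, ?_, ?_⟩
  · have : m - 1 ≠ 0 := sub_ne_zero.mpr hm_ne1
    have := (ZMod.val_eq_zero (m - 1)).not.mpr this
    omega
  · -- val ≤ p - 3
    have hlt : (m - 1).val < p := ZMod.val_lt (m - 1)
    have hne1 : (m - 1).val ≠ p - 1 := by
      intro h
      have : ((m - 1).val : ZMod p) = ((p - 1 : ℕ) : ZMod p) := by rw [h]
      rw [ZMod.natCast_val, ZMod.cast_id] at this
      have hcast : ((p - 1 : ℕ) : ZMod p) = -1 := by
        have : ((p - 1 : ℕ) : ZMod p) = (p : ZMod p) - 1 := by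
          push_cast [Nat.cast_sub (by omega : 1 ≤ p)]
          ring
        rw [this, ZMod.natCast_self]
        ring
      rw [hcast] at this
      exact hm_ne0 (by linear_combination this)
    have hne2 : (m - 1).val ≠ p - 2 := by
      intro h
      have : ((m - 1).val : ZMod p) = ((p - 2 : ℕ) : ZMod p) := by rw [h]
      rw [ZMod.natCast_val, ZMod.cast_id] at this
      have hcast : ((p - 2 : ℕ) : ZMod p) = -2 := by
        have : ((p - 2 : ℕ) : ZMod p) = (p : ZMod p) - 2 := by
          push_cast [Nat.cast_sub (by omega : 2 ≤ p)]
          ring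
        rw [this, ZMod.natCast_self]
        ring
      rw [hcast] at this
      exact hm_nem1 (by linear_combination this)
    omega
  · show legendreSym p ((((m-1).val : ℕ) : ℤ)) = 1
    rw [legendreSym]
    have : (((((m-1).val : ℕ) : ℤ)) : ZMod p) = m - 1 := by
      push_cast
      rw [ZMod.natCast_val, ZMod.cast_id]
    rw [this]
    exact hchim1
  · rw [legendreSym]
    have : ((((((m-1).val : ℕ) : ℤ)) + 1 : ℤ) : ZMod p) = m := by
      push_cast
      rw [ZMod.natCast_val, ZMod.cast_id]
      ring
    rw [this]
    exact hm0
  · rw [legendreSym]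
    have : ((((((m-1).val : ℕ) : ℤ)) + 2 : ℤ) : ZMod p) = m + 1 := by
      push_cast
      rw [ZMod.natCast_val, ZMod.cast_id]
      ring
    rw [this]
    exact hchimp1
end

section
/- Let p ≥ 5 be prime with p ≡ 9 or 13 (mod 16), such that r = (p-3)/2 is an odd prime and 2 is a primitive root modulo r. Then the sequence (tₙ) (tₙ = 1 iff consecutive quadratic residues qₙ, qₙ₊₁ mod p satisfy qₙ₊₁ = qₙ+1, extended with period r) has linear complexity (p-3)/2 if p ≡ 9 (mod 16) and (p-5)/2 if p ≡ 13 (mod 16). -/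
open Polynomial

/-- The shift operator on sequences. -/
def shiftMap : (ℕ → ZMod 2) →ₗ[ZMod 2] (ℕ → ZMod 2) where
  toFun s := fun n => s (n + 1)
  map_add' _ _ := rfl
  map_smul' _ _ := rfl

lemma shift_pow (k : ℕ) (s : ℕ → ZMod 2) (n : ℕ) :
    ((shiftMap ^ k) s) n = s (n + k) := by
  induction k generalizing s n with
  | zero => rfl
  | succ k ih =>
    rw [pow_succ, Module.End.mul_apply]
    calc ((shiftMap ^ k) (shiftMap s)) n = (shiftMap s) (n + k) := ih _ _
      _ = s (n + k + 1) := rfl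
      _ = s (n + (k + 1)) := by ring_nf


/-- `f` annihilates `t` under the shift action. -/
def Ann (f : (ZMod 2)[X]) (t : ℕ → ZMod 2) : Prop :=
    (Polynomial.aeval shiftMap f) t = 0

lemma ann_mul_left (f g : (ZMod 2)[X]) (t : ℕ → ZMod 2) (h : Ann f t) : Ann (g * f) t := by
  unfold Ann at *
  rw [map_mul, Module.End.mul_apply, h, map_zero]

lemma ann_add (f g : (ZMod 2)[X]) (t : ℕ → ZMod 2) (hf : Ann f t) (hg : Ann g t) :
    Ann (f + g) t := by
  unfold Ann at *
  rw [map_add, LinearMap.add_apply, hf, hg, add_zero]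

lemma ann_one (t : ℕ → ZMod 2) (h : Ann 1 t) : t = 0 := by
  unfold Ann at h
  rwa [map_one, Module.End.one_apply] at h

lemma ann_X_sub_one (t : ℕ → ZMod 2) (h : Ann (X - 1) t) (n : ℕ) : t n = t 0 := by
  unfold Ann at h
  have key : ∀ m, t (m + 1) = t m := by
    intro m
    have := congrFun h m
    simp only [map_sub, aeval_X, map_one, LinearMap.sub_apply, Module.End.one_apply,
      Pi.sub_apply, Pi.zero_apply] at this
    have h1 : (shiftMap t) m = t (m + 1) := rfl
    rw [h1] at this
    linear_combination this  -- t(m+1) - t m = 0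
  induction n with
  | zero => rfl
  | succ n ih => rw [key, ih]

lemma ann_geom (r : ℕ) (t : ℕ → ZMod 2) (h : Ann (∑ i ∈ Finset.range r, X ^ i) t) :
    ∑ i ∈ Finset.range r, t i = 0 := by
  unfold Ann at h
  have := congrFun h 0
  simp only [map_sum, map_pow, aeval_X, LinearMap.sum_apply, Pi.zero_apply] at this
  rw [Finset.sum_apply] at this
  calc ∑ i ∈ Finset.range r, t i = ∑ i ∈ Finset.range r, ((shiftMap ^ i) t) 0 := by
        apply Finset.sum_congr rfl; intro i _; rw [shift_pow]; norm_num
    _ = 0 := this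

/-- A recurrence of order `L` yields an annihilating monic polynomial of degree `L`. -/
lemma ann_of_recurrence (t : ℕ → ZMod 2) (L : ℕ) (c : ℕ → ZMod 2)
    (hc : ∀ n : ℕ, t (n + L) = ∑ i ∈ Finset.range L, c i * t (n + i)) :
    Ann (X ^ L - ∑ i ∈ Finset.range L, C (c i) * X ^ i) t := by
  unfold Ann
  funext n
  simp only [map_sub, map_pow, aeval_X, map_sum, map_mul, aeval_C,
    LinearMap.sub_apply, LinearMap.sum_apply, Pi.sub_apply, Pi.zero_apply]
  rw [Finset.sum_apply, shift_pow]
  have hterm : ∀ i ∈ Finset.range L,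
      (((algebraMap (ZMod 2) (Module.End (ZMod 2) (ℕ → ZMod 2))) (c i) * shiftMap ^ i) t) n
        = c i * t (n + i) := by
    intro i _
    rw [Module.End.mul_apply]
    have : ((algebraMap (ZMod 2) (Module.End (ZMod 2) (ℕ → ZMod 2))) (c i)) ((shiftMap ^ i) t)
        = c i • ((shiftMap ^ i) t) := by
      rfl
    rw [this]
    simp [shift_pow]
  rw [Finset.sum_congr rfl hterm, ← hc n, sub_self]


lemma phi_irreducible (r : ℕ) (hr : r.Prime) (hrodd : Odd r)
    (hprim : orderOf (2 : ZMod r) = r - 1) :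
    Irreducible (∑ i ∈ Finset.range r, (X : (ZMod 2)[X]) ^ i) := by
  haveI : Fact (Nat.Prime r) := ⟨hr⟩
  set Φ : (ZMod 2)[X] := ∑ i ∈ Finset.range r, X ^ i with hΦ
  have hrpos : 0 < r := hr.pos
  have hr3 : 3 ≤ r := by
    obtain ⟨k, hk⟩ := hrodd
    have := hr.two_le
    omega
  have hgeom : Φ * (X - 1) = X ^ r - 1 := geom_sum_mul X r
  have hXr0 : (X : (ZMod 2)[X]) ^ r - 1 ≠ 0 := by
    have := X_pow_sub_C_ne_zero hrpos (1 : ZMod 2)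
    simpa using this
  have hΦ0 : Φ ≠ 0 := fun h => hXr0 (by rw [← hgeom, h, zero_mul])
  have hX1 : (X - 1 : (ZMod 2)[X]) ≠ 0 := X_sub_C_ne_zero 1
  have hΦdeg : Φ.natDegree = r - 1 := by
    have h1 : (Φ * (X - 1)).natDegree = r := by
      rw [hgeom]
      have := natDegree_X_pow_sub_C (n := r) (r := (1 : ZMod 2))
      simpa using this
    rw [natDegree_mul hΦ0 hX1] at h1
    have : (X - 1 : (ZMod 2)[X]).natDegree = 1 := by
      have := natDegree_X_sub_C (1 : ZMod 2)
      simpa using this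
    omega
  have hΦ1 : Φ.eval 1 = 1 := by
    have h1 : Φ.eval 1 = (r : ZMod 2) := by simp [hΦ, eval_finset_sum]
    rw [h1]
    obtain ⟨k, hk⟩ := hrodd
    subst hk
    push_cast
    ring_nf
    simp [show ((2:ZMod 2)) = 0 from rfl]
  have key : ∀ f : (ZMod 2)[X], Irreducible f → f ∣ Φ → r - 1 ≤ f.natDegree := by
    intro f hf hfd
    have hf0 : f ≠ 0 := hf.ne_zero
    haveI : Fact (Irreducible f) := ⟨hf⟩
    set ζ : AdjoinRoot f := AdjoinRoot.root f with hζdef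
    let pb : PowerBasis (ZMod 2) (AdjoinRoot f) := AdjoinRoot.powerBasis hf0
    haveI : Fintype (AdjoinRoot f) := Module.fintypeOfFintype pb.basis
    have hcard : Fintype.card (AdjoinRoot f) = 2 ^ f.natDegree := by
      rw [Module.card_fintype pb.basis]
      have hdim : pb.dim = f.natDegree := AdjoinRoot.powerBasis_dim hf0
      simp [hdim]
    have hζΦ : (Polynomial.aeval ζ) Φ = 0 := by
      obtain ⟨g, hg⟩ := hfd
      rw [hg, map_mul, AdjoinRoot.aeval_eq, AdjoinRoot.mk_self, zero_mul]
    have hζr : ζ ^ r = 1 := by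
      have h := congrArg (fun q => (Polynomial.aeval ζ) q) hgeom
      simp only [map_mul, map_sub, map_pow, aeval_X, map_one, hζΦ, zero_mul] at h
      exact sub_eq_zero.mp h.symm
    have hζne1 : ζ ≠ 1 := by
      intro h1
      have h0 : (Polynomial.aeval ζ) f = 0 := by
        rw [AdjoinRoot.aeval_eq, AdjoinRoot.mk_self]
      have h1K : ζ = algebraMap (ZMod 2) (AdjoinRoot f) 1 := by rw [h1, map_one]
      rw [h1K, aeval_algebraMap_apply_eq_algebraMap_eval] at h0
      have hinj : Function.Injective (algebraMap (ZMod 2) (AdjoinRoot f)) :=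
        (algebraMap (ZMod 2) (AdjoinRoot f)).injective
      have hroot : f.eval 1 = 0 := by
        apply hinj; rw [h0, map_zero]
      have hdvd : (X - 1 : (ZMod 2)[X]) ∣ f := by
        have := dvd_iff_isRoot (p := f) (a := (1 : ZMod 2))
        simpa using this.mpr hroot
      have hdvdΦ : (X - 1 : (ZMod 2)[X]) ∣ Φ := hdvd.trans hfd
      obtain ⟨g, hg⟩ := hdvdΦ
      have : Φ.eval 1 = 0 := by rw [hg]; simp
      rw [hΦ1] at this
      exact one_ne_zero this
    have hord : orderOf ζ = r := orderOf_eq_prime hζr hζne1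
    have hζne0 : ζ ≠ 0 := by
      intro h0
      rw [h0, zero_pow hrpos.ne'] at hζr
      exact zero_ne_one hζr
    have hdvd : r ∣ 2 ^ f.natDegree - 1 := by
      rw [← hcard, ← hord]
      exact orderOf_dvd_of_pow_eq_one (FiniteField.pow_card_sub_one_eq_one ζ hζne0)
    have hdpos : 0 < f.natDegree := hf.natDegree_pos
    have h2pow : (2 : ZMod r) ^ f.natDegree = 1 := by
      have h1le : 1 ≤ 2 ^ f.natDegree := Nat.one_le_two_pow
      obtain ⟨c, hc⟩ := hdvd
      have he : 2 ^ f.natDegree = r * c + 1 := by omega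
      have : ((2 : ℕ) : ZMod r) ^ f.natDegree = 1 := by
        rw [← Nat.cast_pow, he]; push_cast; simp
      simpa using this
    have hd := orderOf_dvd_of_pow_eq_one h2pow
    rw [hprim] at hd
    exact Nat.le_of_dvd hdpos hd
  constructor
  · intro hu
    have := natDegree_eq_zero_of_isUnit hu
    omega
  · intro a b hab
    by_contra hcon
    push_neg at hcon
    obtain ⟨ha, hb⟩ := hcon
    have ha0 : a ≠ 0 := by rintro rfl; rw [zero_mul] at hab; exact hΦ0 hab
    have hb0 : b ≠ 0 := by rintro rfl; rw [mul_zero] at hab; exact hΦ0 hab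
    obtain ⟨fa, hfa, hfad⟩ := WfDvdMonoid.exists_irreducible_factor ha ha0
    obtain ⟨fb, hfb, hfbd⟩ := WfDvdMonoid.exists_irreducible_factor hb hb0
    have h1 := key fa hfa (hfad.trans ⟨b, hab⟩)
    have h2 := key fb hfb (hfbd.trans ⟨a, by rw [hab]; ring⟩)
    have h3 : fa.natDegree ≤ a.natDegree := natDegree_le_of_dvd hfad ha0
    have h4 : fb.natDegree ≤ b.natDegree := natDegree_le_of_dvd hfbd hb0
    have h5 : a.natDegree + b.natDegree = r - 1 := by
      rw [← natDegree_mul ha0 hb0, ← hab, hΦdeg]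
    omega

lemma window_sum (r : ℕ) (t : ℕ → ZMod 2) (hper : ∀ n, t (n + r) = t n) (n : ℕ) :
    ∑ i ∈ Finset.range r, t (n + i) = ∑ i ∈ Finset.range r, t i := by
  induction n with
  | zero => simp
  | succ n ih =>
    have h1 : ∑ i ∈ Finset.range (r + 1), t (n + i)
        = (∑ i ∈ Finset.range r, t (n + (i + 1))) + t (n + 0) := Finset.sum_range_succ' _ r
    have h2 : ∑ i ∈ Finset.range (r + 1), t (n + i)
        = (∑ i ∈ Finset.range r, t (n + i)) + t (n + r) := Finset.sum_range_succ _ r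
    have h3 : ∑ i ∈ Finset.range r, t (n + 1 + i) = ∑ i ∈ Finset.range r, t (n + (i + 1)) := by
      apply Finset.sum_congr rfl; intro i _; ring_nf
    rw [h3]
    have h4 := hper n
    rw [← ih]
    have := h1.symm.trans h2
    rw [h4] at this
    simpa [add_comm] using this

/-- main algebraic lemma -/
lemma complexity_eq (r : ℕ) (hr : r.Prime) (hrodd : Odd r)
    (hprim : orderOf (2 : ZMod r) = r - 1)
    (t : ℕ → ZMod 2) (hper : ∀ n, t (n + r) = t n)
    (h1 : ∃ n, t n = 1) (h0 : ∃ n, t n = 0) :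
    LinearComplexity t = if (∑ n ∈ Finset.range r, t n) = 0 then r - 1 else r := by
  classical
  set Φ : (ZMod 2)[X] := ∑ i ∈ Finset.range r, X ^ i with hΦdef
  have hΦirr : Irreducible Φ := phi_irreducible r hr hrodd hprim
  have hrpos : 0 < r := hr.pos
  have hgeom : Φ * (X - 1) = X ^ r - 1 := geom_sum_mul X r
  have hΦ0 : Φ ≠ 0 := hΦirr.ne_zero
  have hX1 : (X - 1 : (ZMod 2)[X]) ≠ 0 := X_sub_C_ne_zero 1
  have hΦdeg : Φ.natDegree = r - 1 := by
    have h1' : (Φ * (X - 1)).natDegree = r := by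
      rw [hgeom]
      have := natDegree_X_pow_sub_C (n := r) (r := (1 : ZMod 2))
      simpa using this
    rw [natDegree_mul hΦ0 hX1] at h1'
    have : (X - 1 : (ZMod 2)[X]).natDegree = 1 := by
      have := natDegree_X_sub_C (1 : ZMod 2)
      simpa using this
    omega
  have htne : t ≠ 0 := by
    obtain ⟨n, hn⟩ := h1
    intro h
    rw [h] at hn
    exact one_ne_zero hn.symm
  have htnc : ¬ (∀ n, t n = t 0) := by
    intro h
    obtain ⟨n1, hn1⟩ := h1
    obtain ⟨n0, hn0⟩ := h0
    rw [h n1] at hn1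
    rw [h n0] at hn0
    rw [hn1] at hn0
    exact one_ne_zero hn0
  -- the annihilator of X^r - 1
  have hannh : Ann (X ^ r - 1) t := by
    unfold Ann
    funext n
    simp only [map_sub, map_pow, aeval_X, map_one, LinearMap.sub_apply, Module.End.one_apply,
      Pi.sub_apply, Pi.zero_apply]
    rw [shift_pow, hper n, sub_self]
  -- key lower-bound: any recurrence order L < r forces Z = 0 and L ≥ r - 1
  have key : ∀ L : ℕ, L < r →
      (∃ c : ℕ → ZMod 2, ∀ n : ℕ, t (n + L) = ∑ i ∈ Finset.range L, c i * t (n + i)) →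
      ((∑ n ∈ Finset.range r, t n) = 0 ∧ r - 1 ≤ L) := by
    intro L hL ⟨c, hc⟩
    set g : (ZMod 2)[X] := ∑ i ∈ Finset.range L, C (c i) * X ^ i with hg
    set f : (ZMod 2)[X] := X ^ L - g with hf
    have hannf : Ann f t := ann_of_recurrence t L c hc
    have hfmonic : f.Monic := by
      rcases Nat.eq_zero_or_pos L with h | h
      · subst h
        have : f = 1 := by simp [hf, hg]
        rw [this]; exact monic_one
      · have hgdeg : g.degree < (L : WithBot ℕ) := by
          apply lt_of_le_of_lt (Polynomial.degree_sum_le _ _)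
          rw [Finset.sup_lt_iff (by exact_mod_cast WithBot.bot_lt_coe L)]
          intro i hi
          apply lt_of_le_of_lt (degree_C_mul_X_pow_le (R := ZMod 2) i (c i))
          exact_mod_cast Nat.cast_lt.mpr (Finset.mem_range.mp hi)
        exact monic_X_pow_sub hgdeg
    have hfne : f ≠ 0 := hfmonic.ne_zero
    have hfdeg : f.natDegree ≤ L := by
      rcases Nat.eq_zero_or_pos L with h | h
      · subst h
        have : f = 1 := by simp [hf, hg]
        simp [this]
      · apply natDegree_le_iff_degree_le.mpr
        rw [hf]
        apply (degree_sub_le _ _).trans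
        apply max_le
        · simpa using degree_X_pow_le (R := ZMod 2) L
        · apply Polynomial.degree_sum_le _ _ |>.trans
          apply Finset.sup_le
          intro i hi
          exact (degree_C_mul_X_pow_le (R := ZMod 2) i (c i)).trans
            (by exact_mod_cast Nat.cast_le.mpr (Finset.mem_range.mp hi).le)
    -- gcd
    set d : (ZMod 2)[X] := EuclideanDomain.gcd f (X ^ r - 1) with hd
    have hdf : d ∣ f := EuclideanDomain.gcd_dvd_left _ _
    have hdh : d ∣ X ^ r - 1 := EuclideanDomain.gcd_dvd_right _ _
    have hdne : d ≠ 0 := by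
      rw [hd, Ne, EuclideanDomain.gcd_eq_zero_iff]
      rintro ⟨h, -⟩
      exact hfne h
    have hannd : Ann d t := by
      rw [hd, EuclideanDomain.gcd_eq_gcd_ab f (X ^ r - 1)]
      apply ann_add
      · rw [mul_comm]; exact ann_mul_left _ _ _ hannf
      · rw [mul_comm]; exact ann_mul_left _ _ _ hannh
    have hddeg : d.natDegree ≤ L := le_trans (natDegree_le_of_dvd hdf hfne) hfdeg
    -- cases on Φ ∣ d
    by_cases hΦd : Φ ∣ d
    · -- then d = Φ
      obtain ⟨e, he⟩ := hΦd
      have hene : e ≠ 0 := by rintro rfl; rw [mul_zero] at he; exact hdne he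
      have hedeg : e.natDegree = 0 := by
        have := natDegree_mul hΦ0 hene
        rw [← he] at this
        omega
      have heC : e = C (e.coeff 0) := eq_C_of_natDegree_eq_zero hedeg
      have hce : e.coeff 0 ≠ 0 := by
        intro h
        rw [h, map_zero] at heC
        exact hene heC
      have hce1 : e.coeff 0 = 1 := by
        have lem : ∀ x : ZMod 2, x ≠ 0 → x = 1 := by decide
        exact lem _ hce
      have hdeq : d = Φ := by rw [he, heC, hce1, map_one, mul_one]
      have hannΦ : Ann Φ t := hdeq ▸ hannd
      have hZ : ∑ n ∈ Finset.range r, t n = 0 := ann_geom r t hannΦ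
      constructor
      · exact hZ
      · have := natDegree_le_of_dvd ⟨e, he⟩ hdne
        omega
    · -- d coprime to Φ hence d ∣ X - 1
      exfalso
      have hcop : IsCoprime Φ d := (hΦirr.coprime_iff_not_dvd).mpr hΦd
      have hdX1 : d ∣ X - 1 := by
        have hdvd : d ∣ (X - 1) * Φ := by rw [mul_comm, hgeom]; exact hdh
        exact hcop.symm.dvd_of_dvd_mul_right hdvd
      by_cases hdu : IsUnit d
      · have hd1 : d ∣ 1 := isUnit_iff_dvd_one.mp hdu
        obtain ⟨e, he⟩ := hd1
        have : Ann 1 t := by rw [he, mul_comm]; exact ann_mul_left _ _ _ hannd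
        exact htne (ann_one t this)
      · -- d is a non-unit divisor of the irreducible X - 1, so d = X - 1
        have hX1irr : Irreducible (X - 1 : (ZMod 2)[X]) := by
          have := irreducible_X_sub_C (1 : ZMod 2)
          simpa using this
        obtain ⟨e, he⟩ := hdX1
        have heu : IsUnit e := (hX1irr.isUnit_or_isUnit he).resolve_left hdu
        obtain ⟨v, hv⟩ := heu
        have hee : e = C (e.coeff 0) := by
          have : e.natDegree = 0 := natDegree_eq_zero_of_isUnit ⟨v, hv⟩
          exact eq_C_of_natDegree_eq_zero this
        have hce : e.coeff 0 ≠ 0 := by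
          intro h
          rw [h, map_zero] at hee
          rw [hee, mul_zero] at he
          exact hX1 he
        have hce1 : e.coeff 0 = 1 := by
          have lem : ∀ x : ZMod 2, x ≠ 0 → x = 1 := by decide
          exact lem _ hce
        have hdeq : d = X - 1 := by rw [he, hee, hce1, map_one, mul_one]
        have : ∀ n, t n = t 0 := ann_X_sub_one t (hdeq ▸ hannd)
        exact htnc this
  -- upper bounds
  have hrS : ∃ c : ℕ → ZMod 2, ∀ n : ℕ,
      t (n + r) = ∑ i ∈ Finset.range r, c i * t (n + i) := by
    refine ⟨fun i => if i = 0 then 1 else 0, fun n => ?_⟩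
    rw [hper n]
    rw [Finset.sum_congr rfl (fun i _ => by
      rw [ite_mul, one_mul, zero_mul] : ∀ i ∈ Finset.range r, (if i = 0 then (1:ZMod 2) else 0) * t (n+i) = if i = 0 then t (n+i) else 0)]
    rw [Finset.sum_ite_eq' (Finset.range r) 0 (fun i => t (n + i))]
    simp [Finset.mem_range, hrpos]
  by_cases hZ : (∑ n ∈ Finset.range r, t n) = 0
  · rw [if_pos hZ]
    have hr1S : ∃ c : ℕ → ZMod 2, ∀ n : ℕ,
        t (n + (r - 1)) = ∑ i ∈ Finset.range (r - 1), c i * t (n + i) := by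
      refine ⟨fun _ => 1, fun n => ?_⟩
      have hw := window_sum r t hper n
      rw [hZ] at hw
      have hsplit : ∑ i ∈ Finset.range r, t (n + i)
          = (∑ i ∈ Finset.range (r - 1), t (n + i)) + t (n + (r - 1)) := by
        have h := Finset.sum_range_succ (fun i => t (n + i)) (r - 1)
        rw [show r - 1 + 1 = r by omega] at h
        exact h
      rw [hsplit] at hw
      have : t (n + (r - 1)) = - ∑ i ∈ Finset.range (r - 1), t (n + i) := by
        linear_combination hw
      rw [this]
      simp only [one_mul]
      rw [← Finset.sum_neg_distrib]
      apply Finset.sum_congr rfl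
      intro i _
      exact CharTwo.neg_eq _
    apply le_antisymm
    · exact Nat.sInf_le hr1S
    · apply le_csInf ⟨r, hrS⟩
      intro L hL
      by_cases h : L < r
      · exact (key L h hL).2
      · omega
  · rw [if_neg hZ]
    apply le_antisymm
    · exact Nat.sInf_le hrS
    · apply le_csInf ⟨r, hrS⟩
      intro L hL
      by_contra h
      push_neg at h
      exact hZ (key L h hL).1

open Finset in

lemma count_consec_squares (p : ℕ) [hpi : Fact p.Prime] (hp4 : p % 4 = 1) :
    4 * (Finset.univ.filter (fun x : ZMod p =>
      x ≠ 0 ∧ x + 1 ≠ 0 ∧ IsSquare x ∧ IsSquare (x + 1))).card + 5 = p := by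
  classical
  have hp : p.Prime := hpi.out
  have hp2 : 2 < p := by
    rcases hp.two_le.lt_or_eq with h | h
    · exact h
    · omega
  haveI : NeZero p := ⟨hp.ne_zero⟩
  have hchar : ringChar (ZMod p) ≠ 2 := by
    rw [ZMod.ringChar_zmod_n]
    omega
  set χ := quadraticChar (ZMod p) with hχ
  have hcardF : Fintype.card (ZMod p) = p := ZMod.card p
  -- the three sums
  have hsum1 : ∑ x : ZMod p, (χ x : ℤ) = 0 := quadraticChar_sum_zero hchar
  have hsum2 : ∑ x : ZMod p, (χ (x + 1) : ℤ) = 0 := by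
    rw [← hsum1]
    exact Fintype.sum_equiv (Equiv.addRight 1) _ _ (fun x => rfl)
  have hχ1 : χ 1 = 1 := by simp [hχ]
  have hsum3 : ∑ x : ZMod p, (χ x * χ (x + 1) : ℤ) = -1 := by
    have hsplit : ∑ x : ZMod p, (χ x * χ (x + 1) : ℤ)
        = ∑ x ∈ univ.filter (fun x : ZMod p => x ≠ 0), (χ x * χ (x + 1) : ℤ) := by
      rw [Finset.sum_filter]
      apply Finset.sum_congr rfl
      intro x _
      by_cases hx : x = 0
      · simp [hx, hχ]
      · simp [hx]
    have hterm : ∀ x : ZMod p, x ≠ 0 → (χ x * χ (x + 1) : ℤ) = χ (1 + x⁻¹) := by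
      intro x hx
      have : x + 1 = x * (1 + x⁻¹) := by
        field_simp
      rw [this, map_mul]
      have hsq : (χ x : ℤ) * χ x = 1 := by
        have := quadraticChar_sq_one (F := ZMod p) hx
        rwa [sq] at this
      push_cast
      rw [← mul_assoc, hsq, one_mul]
    rw [hsplit, Finset.sum_congr rfl (fun x hx => hterm x (by simpa using hx))]
    -- reindex: x ↦ 1 + x⁻¹ bijection from {x ≠ 0} to {y ≠ 1}
    have hre : ∑ x ∈ univ.filter (fun x : ZMod p => x ≠ 0), (χ (1 + x⁻¹) : ℤ)
        = ∑ y ∈ univ.filter (fun y : ZMod p => y ≠ 1), (χ y : ℤ) := by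
      apply Finset.sum_nbij' (i := fun x => 1 + x⁻¹) (j := fun y => (y - 1)⁻¹)
      · intro x hx
        simp only [mem_filter, mem_univ, true_and] at hx ⊢
        intro h
        have : x⁻¹ = 0 := by linear_combination h
        exact hx (inv_eq_zero.mp this)
      · intro y hy
        simp only [mem_filter, mem_univ, true_and] at hy ⊢
        intro h
        exact hy (by rwa [inv_eq_zero, sub_eq_zero] at h)
      · intro x hx
        simp only [mem_filter, mem_univ, true_and] at hx
        rw [add_sub_cancel_left, inv_inv]
      · intro y hy
        simp only [mem_filter, mem_univ, true_and] at hy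
        rw [inv_inv, add_sub_cancel]
      · intro x _
        rfl
    rw [hre]
    have : ∑ y ∈ univ.filter (fun y : ZMod p => y ≠ 1), (χ y : ℤ)
        = (∑ y : ZMod p, (χ y : ℤ)) - χ 1 := by
      rw [show univ.filter (fun y : ZMod p => y ≠ 1) = univ.erase 1 from Finset.filter_ne' univ 1]
      have := Finset.sum_erase_add univ (fun y : ZMod p => (χ y : ℤ)) (Finset.mem_univ 1)
      linarith
    rw [this, hsum1, hχ1]
    norm_num
  -- value of χ at -1
  have hm1ne : (-1 : ZMod p) ≠ 0 := by
    intro h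
    have : (1 : ZMod p) = 0 := by linear_combination -h
    exact one_ne_zero this
  have hsqm1 : IsSquare (-1 : ZMod p) := by
    rw [FiniteField.isSquare_neg_one_iff, hcardF]
    omega
  have hχm1 : χ (-1) = 1 := (quadraticChar_one_iff_isSquare hm1ne).mpr hsqm1
  have h0nem1 : (0 : ZMod p) ≠ -1 := fun h => hm1ne h.symm
  have hχ0 : χ 0 = 0 := quadraticChar_zero
  -- pointwise identity
  set S := Finset.univ.filter (fun x : ZMod p =>
      x ≠ 0 ∧ x + 1 ≠ 0 ∧ IsSquare x ∧ IsSquare (x + 1)) with hS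
  have hpt : ∀ x : ZMod p, (1 + (χ x : ℤ)) * (1 + χ (x + 1))
      = (if x ∈ S then 4 else 0) + (if x = 0 then 2 else 0) + (if x = -1 then 2 else 0) := by
    intro x
    by_cases hx0 : x = 0
    · subst hx0
      simp [hS, hχ1, hχ0, h0nem1.symm, h0nem1]
    · by_cases hxm1 : x = -1
      · subst hxm1
        have : (-1 : ZMod p) + 1 = 0 := by ring
        simp [hS, this, hχ0, hχm1, hm1ne]
      · have hx1ne : x + 1 ≠ 0 := by
          intro h
          exact hxm1 (by linear_combination h)
        by_cases hsx : IsSquare x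
        · by_cases hsx1 : IsSquare (x + 1)
          · have e1 : χ x = 1 := (quadraticChar_one_iff_isSquare hx0).mpr hsx
            have e2 : χ (x + 1) = 1 := (quadraticChar_one_iff_isSquare hx1ne).mpr hsx1
            have hmem : x ∈ S := by simp [hS, hx0, hx1ne, hsx, hsx1]
            rw [e1, e2, if_pos hmem, if_neg hx0, if_neg hxm1]
            norm_num
          · have e2 : χ (x + 1) = -1 := quadraticChar_neg_one_iff_not_isSquare.mpr hsx1
            have hmem : x ∉ S := by simp [hS, hsx1]
            rw [e2, if_neg hmem, if_neg hx0, if_neg hxm1]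
            push_cast
            ring
        · have e1 : χ x = -1 := quadraticChar_neg_one_iff_not_isSquare.mpr hsx
          have hmem : x ∉ S := by simp [hS, hsx]
          rw [e1, if_neg hmem, if_neg hx0, if_neg hxm1]
          push_cast
          ring
  -- sum both sides
  have hLHS : ∑ x : ZMod p, (1 + (χ x : ℤ)) * (1 + χ (x + 1)) = p - 1 := by
    have expand : ∀ x : ZMod p, (1 + (χ x : ℤ)) * (1 + χ (x + 1))
        = 1 + χ x + χ (x + 1) + χ x * χ (x + 1) := by intro x; ring
    rw [Finset.sum_congr rfl (fun x _ => expand x)]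
    rw [Finset.sum_add_distrib, Finset.sum_add_distrib, Finset.sum_add_distrib,
      hsum1, hsum2, hsum3, Finset.sum_const, Finset.card_univ, hcardF]
    push_cast
    ring
  have hRHS : ∑ x : ZMod p, ((if x ∈ S then (4:ℤ) else 0) + (if x = 0 then 2 else 0)
      + (if x = -1 then 2 else 0)) = 4 * S.card + 4 := by
    rw [Finset.sum_add_distrib, Finset.sum_add_distrib]
    rw [Finset.sum_ite_mem, Finset.univ_inter, Finset.sum_const]
    rw [Finset.sum_ite_eq' Finset.univ (0 : ZMod p) (fun _ => (2:ℤ)),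
      Finset.sum_ite_eq' Finset.univ (-1 : ZMod p) (fun _ => (2:ℤ))]
    simp [hm1ne.symm, mul_comm]
    ring
  have := (Finset.sum_congr rfl (fun x _ => hpt x)).symm.trans hLHS
  rw [hRHS] at this
  have hp5 : 5 ≤ p := by omega
  have : (4 * S.card + 4 : ℤ) = p - 1 := this
  omega



theorem linearComplexity_tn (p : ℕ) (hp : p.Prime) (hp16 : p % 16 = 9 ∨ p % 16 = 13)
    (hr : Nat.Prime ((p - 3) / 2)) (hrodd : Odd ((p - 3) / 2))
    (hprim : orderOf (2 : ZMod ((p - 3) / 2)) = (p - 3) / 2 - 1)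
    (q : ℕ → ℕ)
    (hmono : ∀ i j : ℕ, i < j → j ≤ (p - 3) / 2 → q i < q j)
    (hbij : ∀ m : ℕ, (1 ≤ m ∧ m ≤ p - 1 ∧ ∃ x : ℕ, x ^ 2 % p = m) ↔
      ∃ n ≤ (p - 3) / 2, q n = m)
    (t : ℕ → ZMod 2)
    (ht : ∀ n ≤ (p - 5) / 2, t n = if q (n + 1) = q n + 1 then 1 else 0)
    (hper : ∀ n, t (n + (p - 3) / 2) = t n) :
    LinearComplexity t = if p % 16 = 9 then (p - 3) / 2 else (p - 5) / 2 := by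
  classical
  haveI : Fact p.Prime := ⟨hp⟩
  haveI : NeZero p := ⟨hp.ne_zero⟩
  set r : ℕ := (p - 3) / 2 with hrdef
  have hp13 : 13 ≤ p := by
    by_contra h
    push_neg at h
    interval_cases p <;> first | omega | (revert hp; decide)
  have hp4 : p % 4 = 1 := by omega
  have hpr : p = 2 * r + 3 := by omega
  have hr1 : (p - 5) / 2 = r - 1 := by omega
  have hrpos : 0 < r := hr.pos
  -- the ZMod p square set
  set S : Finset (ZMod p) := Finset.univ.filter (fun x : ZMod p =>
      x ≠ 0 ∧ x + 1 ≠ 0 ∧ IsSquare x ∧ IsSquare (x + 1)) with hSdef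
  have hcount : 4 * S.card + 5 = p := count_consec_squares p hp4
  -- bridge (i)
  have bridgei : ∀ m : ℕ, m < p → ((∃ x : ℕ, x ^ 2 % p = m) ↔ IsSquare ((m : ZMod p))) := by
    intro m hm
    constructor
    · rintro ⟨x, hx⟩
      refine ⟨(x : ZMod p), ?_⟩
      rw [← hx, ZMod.natCast_mod]
      push_cast
      ring
    · rintro ⟨y, hy⟩
      refine ⟨y.val, ?_⟩
      have h1 : ((y.val ^ 2 : ℕ) : ZMod p) = (m : ZMod p) := by
        push_cast
        rw [ZMod.natCast_rightInverse y, hy]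
        ring
      have h2 : (y.val ^ 2 : ℕ) % p = ((y.val ^ 2 : ℕ) : ZMod p).val := (ZMod.val_natCast p _).symm
      rw [h2, h1, ZMod.val_natCast, Nat.mod_eq_of_lt hm]
  -- the ℕ pair set
  set T : Finset ℕ := (Finset.range p).filter (fun a =>
      (1 ≤ a ∧ a ≤ p - 1 ∧ ∃ x : ℕ, x ^ 2 % p = a) ∧
      (1 ≤ a + 1 ∧ a + 1 ≤ p - 1 ∧ ∃ x : ℕ, x ^ 2 % p = a + 1)) with hTdef
  -- bridge 1 : S.card = T.card
  have hST : S.card = T.card := by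
    apply Finset.card_bij (fun x _ => x.val)
    · intro x hx
      simp only [hSdef, Finset.mem_filter, Finset.mem_univ, true_and] at hx
      obtain ⟨hx0, hx10, hsx, hsx1⟩ := hx
      have hvlt : x.val < p := ZMod.val_lt x
      have hv1 : 1 ≤ x.val := by
        rcases Nat.eq_zero_or_pos x.val with h | h
        · exact absurd ((ZMod.val_eq_zero x).mp h) hx0
        · exact h
      have hxv : ((x.val : ℕ) : ZMod p) = x := ZMod.natCast_rightInverse x
      have hv1lt : x.val + 1 < p := by
        rcases Nat.lt_or_ge (x.val + 1) p with h | h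
        · exact h
        · exfalso
          have : x.val + 1 = p := by omega
          apply hx10
          have : ((x.val + 1 : ℕ) : ZMod p) = 0 := by rw [this, ZMod.natCast_self]
          rwa [Nat.cast_add, Nat.cast_one, hxv] at this
      simp only [hTdef, Finset.mem_filter, Finset.mem_range]
      refine ⟨hvlt, ⟨hv1, by omega, ?_⟩, ⟨by omega, by omega, ?_⟩⟩
      · exact (bridgei x.val hvlt).mpr (by rw [hxv]; exact hsx)
      · apply (bridgei (x.val + 1) hv1lt).mpr
        have : ((x.val + 1 : ℕ) : ZMod p) = x + 1 := by
          rw [Nat.cast_add, Nat.cast_one, hxv]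
        rw [this]
        exact hsx1
    · intro x1 h1 x2 h2 h
      exact ZMod.val_injective p h
    · intro a ha
      simp only [hTdef, Finset.mem_filter, Finset.mem_range] at ha
      obtain ⟨halt, ⟨ha1, hale, hsq⟩, ⟨_, ha1le, hsq1⟩⟩ := ha
      refine ⟨(a : ZMod p), ?_, ZMod.val_cast_of_lt halt⟩
      simp only [hSdef, Finset.mem_filter, Finset.mem_univ, true_and]
      have ha1lt : a + 1 < p := by omega
      have hc1 : ((a : ZMod p) + 1) = ((a + 1 : ℕ) : ZMod p) := by push_cast; ring
      refine ⟨?_, ?_, (bridgei a halt).mp hsq, ?_⟩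
      · intro h
        have := ZMod.val_cast_of_lt halt
        rw [h, ZMod.val_zero] at this
        omega
      · rw [hc1]
        intro h
        have := ZMod.val_cast_of_lt ha1lt
        rw [h, ZMod.val_zero] at this
        omega
      · rw [hc1]
        exact (bridgei (a + 1) ha1lt).mp hsq1
  -- bridge 2 : Wset.card = T.card
  set Wset : Finset ℕ := (Finset.range r).filter (fun n => q (n + 1) = q n + 1) with hWdef
  have hWT : Wset.card = T.card := by
    apply Finset.card_bij (fun n _ => q n)
    · intro n hn
      simp only [hWdef, Finset.mem_filter, Finset.mem_range] at hn
      obtain ⟨hnr, hq1⟩ := hn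
      have hQ1 : 1 ≤ q n ∧ q n ≤ p - 1 ∧ ∃ x : ℕ, x ^ 2 % p = q n :=
        (hbij (q n)).mpr ⟨n, by omega, rfl⟩
      have hQ2 : 1 ≤ q (n+1) ∧ q (n+1) ≤ p - 1 ∧ ∃ x : ℕ, x ^ 2 % p = q (n+1) :=
        (hbij (q (n+1))).mpr ⟨n + 1, by omega, rfl⟩
      rw [hq1] at hQ2
      simp only [hTdef, Finset.mem_filter, Finset.mem_range]
      exact ⟨by omega, hQ1, hQ2⟩
    · intro n1 h1 n2 h2 h
      simp only [hWdef, Finset.mem_filter, Finset.mem_range] at h1 h2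
      by_contra hne
      rcases Nat.lt_or_ge n1 n2 with hlt | hge
      · have := hmono n1 n2 hlt (by omega)
        omega
      · have : n2 < n1 := by omega
        have := hmono n2 n1 this (by omega)
        omega
    · intro a ha
      simp only [hTdef, Finset.mem_filter, Finset.mem_range] at ha
      obtain ⟨halt, hQa, hQa1⟩ := ha
      obtain ⟨n, hnr, hqn⟩ := (hbij a).mp hQa
      obtain ⟨m, hmr, hqm⟩ := (hbij (a + 1)).mp hQa1
      have hnm : n < m := by
        rcases Nat.lt_or_ge n m with h | h
        · exact h
        · exfalso
          rcases Nat.eq_or_lt_of_le h with h' | h'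
          · rw [h'] at hqm
            omega
          · have := hmono m n h' (by omega)
            omega
      have hn1r : n + 1 ≤ r := by omega
      have hstep : q (n + 1) = a + 1 := by
        have hlow : q n < q (n + 1) := hmono n (n + 1) (by omega) hn1r
        have hhigh : q (n + 1) ≤ q m := by
          rcases Nat.eq_or_lt_of_le (show n + 1 ≤ m by omega) with h' | h'
          · rw [h']
          · exact le_of_lt (hmono (n + 1) m h' (by omega))
        omega
      refine ⟨n, ?_, hqn⟩
      simp only [hWdef, Finset.mem_filter, Finset.mem_range]
      exact ⟨by omega, by rw [hstep, hqn]⟩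
  -- weight count
  have hWcard : 4 * Wset.card + 5 = p := by rw [hWT, ← hST]; exact hcount
  -- existence of values 1 and 0
  have h1 : ∃ n, t n = 1 := by
    have hpos : 0 < Wset.card := by omega
    obtain ⟨n, hn⟩ := Finset.card_pos.mp hpos
    simp only [hWdef, Finset.mem_filter, Finset.mem_range] at hn
    refine ⟨n, ?_⟩
    rw [ht n (by omega), if_pos hn.2]
  have h0 : ∃ n, t n = 0 := by
    have hWr : Wset.card < r := by omega
    have hex : ∃ n, n ∈ Finset.range r ∧ n ∉ Wset := by
      by_contra h
      push_neg at h
      have hsub : Finset.range r ⊆ Wset := fun n hn => h n hn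
      have := Finset.card_le_card hsub
      rw [Finset.card_range] at this
      omega
    obtain ⟨n, hnr, hnot⟩ := hex
    rw [Finset.mem_range] at hnr
    have hq : ¬ (q (n + 1) = q n + 1) := by
      intro hcontra
      exact hnot (by simp only [hWdef, Finset.mem_filter, Finset.mem_range]; exact ⟨hnr, hcontra⟩)
    refine ⟨n, ?_⟩
    rw [ht n (by omega), if_neg hq]
  -- the period sum
  have hZ : ∑ n ∈ Finset.range r, t n = (Wset.card : ZMod 2) := by
    rw [hWdef, ← Finset.sum_boole]
    apply Finset.sum_congr rfl
    intro n hn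
    rw [Finset.mem_range] at hn
    rw [ht n (by omega)]
  have hmain := complexity_eq r hr hrodd hprim t hper h1 h0
  rcases hp16 with h9 | h13
  · rw [if_pos h9]
    have hne : (∑ n ∈ Finset.range r, t n) ≠ 0 := by
      rw [hZ]
      rw [Ne, ZMod.natCast_eq_zero_iff]
      omega
    rw [hmain, if_neg hne]
  · rw [if_neg (by omega)]
    have heq : (∑ n ∈ Finset.range r, t n) = 0 := by
      rw [hZ, ZMod.natCast_eq_zero_iff]
      omega
    rw [hmain, if_pos heq]
    omega
end

section
/- For any binary sequence (sₙ) and any N, the correlation measure of order 2 satisfies C₂(sₙ) ≥ M(sₙ) - 1, where M(sₙ) is the maximum order complexity. -/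
/-- The maximum order complexity of a binary sequence of length `N`: the least `M` such
that there is a function `f : 𝔽₂^M → 𝔽₂` with `s (n + M) = f (s n, …, s (n + M - 1))`
for all `n` with `n + M < N`. -/
noncomputable def MaxOrderComplexity (N : ℕ) (s : ℕ → ZMod 2) : ℕ :=
  sInf {M : ℕ | ∃ f : (Fin M → ZMod 2) → ZMod 2, ∀ n : ℕ, n + M < N →
    s (n + M) = f (fun i => s (n + i))}

/-- The correlation measure of order `2` of a binary sequence of length `N`. -/
noncomputable def CorrelationMeasure2 (N : ℕ) (s : ℕ → ZMod 2) : ℕ :=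
  sSup {v : ℕ | ∃ M d₁ d₂ : ℕ, d₁ < d₂ ∧ d₂ + M ≤ N ∧
    v = (∑ n ∈ Finset.range M, (-1 : ℤ) ^ ((s (n + d₁)).val + (s (n + d₂)).val)).natAbs}

open Classical in
lemma exists_pair (m N : ℕ) (s : ℕ → ZMod 2)
    (h : ¬ ∃ f : (Fin m → ZMod 2) → ZMod 2, ∀ n : ℕ, n + m < N →
      s (n + m) = f (fun i => s (n + i))) :
    ∃ d₁ d₂ : ℕ, d₁ < d₂ ∧ d₂ + m < N ∧ (∀ i : Fin m, s (d₁ + i) = s (d₂ + i)) ∧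
      s (d₁ + m) ≠ s (d₂ + m) := by
  by_contra hc
  push_neg at hc
  have det : ∀ a b : ℕ, a + m < N → b + m < N →
      (∀ i : Fin m, s (a + i) = s (b + i)) → s (a + m) = s (b + m) := by
    intro a b ha hb heq
    rcases lt_trichotomy a b with hab | hab | hab
    · exact hc a b hab hb heq
    · rw [hab]
    · exact (hc b a hab ha (fun i => (heq i).symm)).symm
  apply h
  refine ⟨fun w => if hw : ∃ n : ℕ, n + m < N ∧ (fun i : Fin m => s (n + i)) = w
      then s (hw.choose + m) else 0, ?_⟩
  intro n hn
  have hw : ∃ k : ℕ, k + m < N ∧ (fun i : Fin m => s (k + i)) = (fun i : Fin m => s (n + i)) :=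
    ⟨n, hn, rfl⟩
  simp only [dif_pos hw]
  exact det n hw.choose hn hw.choose_spec.1
    (fun i => (congrFun hw.choose_spec.2 i).symm)

theorem correlation2_ge_maxOrderComplexity_sub_one (N : ℕ) (s : ℕ → ZMod 2) :
    MaxOrderComplexity N s - 1 ≤ CorrelationMeasure2 N s := by
  rcases Nat.eq_zero_or_pos (MaxOrderComplexity N s) with h0 | hpos
  · simp [h0]
  set m := MaxOrderComplexity N s - 1 with hm
  have hlt : m < MaxOrderComplexity N s := by omega
  have hnot : m ∉ {M : ℕ | ∃ f : (Fin M → ZMod 2) → ZMod 2, ∀ n : ℕ, n + M < N →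
      s (n + M) = f (fun i => s (n + i))} := Nat.notMem_of_lt_sInf hlt
  obtain ⟨d₁, d₂, hd, hdN, heq, _⟩ := exists_pair m N s hnot
  have hval : ∀ n ∈ Finset.range m, (-1 : ℤ) ^ ((s (n + d₁)).val + (s (n + d₂)).val) = 1 := by
    intro n hn
    rw [Finset.mem_range] at hn
    have : s (n + d₁) = s (n + d₂) := by
      have := heq ⟨n, hn⟩
      simpa [add_comm] using this
    rw [this]
    exact Even.neg_one_pow ⟨(s (n + d₂)).val, rfl⟩
  have hsum : (∑ n ∈ Finset.range m,
      (-1 : ℤ) ^ ((s (n + d₁)).val + (s (n + d₂)).val)).natAbs = m := by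
    rw [Finset.sum_congr rfl hval]
    simp
  have hmem : m ∈ {v : ℕ | ∃ M d₁ d₂ : ℕ, d₁ < d₂ ∧ d₂ + M ≤ N ∧
      v = (∑ n ∈ Finset.range M, (-1 : ℤ) ^ ((s (n + d₁)).val + (s (n + d₂)).val)).natAbs} :=
    ⟨m, d₁, d₂, hd, le_of_lt hdN, hsum.symm⟩
  have hbdd : BddAbove {v : ℕ | ∃ M d₁ d₂ : ℕ, d₁ < d₂ ∧ d₂ + M ≤ N ∧
      v = (∑ n ∈ Finset.range M, (-1 : ℤ) ^ ((s (n + d₁)).val + (s (n + d₂)).val)).natAbs} := by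
    refine ⟨N, fun v hv => ?_⟩
    obtain ⟨M, e₁, e₂, he, heN, rfl⟩ := hv
    calc (∑ n ∈ Finset.range M, (-1 : ℤ) ^ ((s (n + e₁)).val + (s (n + e₂)).val)).natAbs
        ≤ ∑ n ∈ Finset.range M,
            ((-1 : ℤ) ^ ((s (n + e₁)).val + (s (n + e₂)).val)).natAbs := by
          exact_mod_cast nat_abs_sum_le _ _
      _ ≤ ∑ _n ∈ Finset.range M, 1 := by
          apply Finset.sum_le_sum
          intro n _
          simp [Int.natAbs_pow]
      _ = M := by simp
      _ ≤ N := by omega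
  exact le_csSup hbdd hmem
end
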